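/- arXiv:1810.06509 — 15 statements merged into one kernel-verified Lean document; each statement's English description precedes it below -/
import Mathlib

section
/- Let E be a real inner product space, K ⊆ E a convex set, x ∈ E, g ∈ E, and η > 0. Let R : E → ℝ be differentiable with gradient ∇R. If y ∈ K minimizes the function z ↦ η·⟪g, z⟫ + B_R(z‖x) over K, then for every z ∈ K one has ⟪η·g + ∇R(y) − ∇R(x), y − z⟫ ≤ 0. -/
open scoped RealInnerProductSpace

/-- Bregman divergence `B_R(z‖x) = R z − R x − ⟪∇R x, z − x⟫` generated by `R`
with gradient field `gradR`. -/
noncomputable def breg {E : Type*} [NormedAddCommGroup E] [InnerProductSpace ℝ E]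
    (R : E → ℝ) (gradR : E → E) (z x : E) : ℝ :=
  R z - R x - ⟪gradR x, z - x⟫

theorem mirror_descent_first_order_optimality
    {E : Type*} [NormedAddCommGroup E] [InnerProductSpace ℝ E]
    (K : Set E) (hK : Convex ℝ K) (x g : E) (η : ℝ) (hη : 0 < η)
    (R : E → ℝ) (gradR : E → E)
    (hR : ∀ p : E, HasFDerivAt R (innerSL ℝ (gradR p)) p)
    (y : E) (hy : y ∈ K)
    (hmin : ∀ z ∈ K, η * ⟪g, y⟫ + breg R gradR y x ≤ η * ⟪g, z⟫ + breg R gradR z x) :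
    ∀ z ∈ K, ⟪η • g + gradR y - gradR x, y - z⟫ ≤ 0 := by
  intro z hz
  set F : E → ℝ := fun p => η * ⟪g, p⟫ + breg R gradR p x with hF
  have hmin' : IsLocalMinOn F K y := by
    apply IsMinOn.localize
    intro p hp
    exact hmin p hp
  have hderiv : HasFDerivAt F (innerSL ℝ (η • g + gradR y - gradR x)) y := by
    have h1 : HasFDerivAt (fun p : E => η * ⟪g, p⟫) (η • innerSL ℝ g) y := by
      exact ((innerSL ℝ g).hasFDerivAt).const_smul η
    have h2 : HasFDerivAt (fun p : E => R p - R x - ⟪gradR x, p - x⟫)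
        (innerSL ℝ (gradR y) - innerSL ℝ (gradR x)) y := by
      have h3 : HasFDerivAt (fun p : E => ⟪gradR x, p - x⟫) (innerSL ℝ (gradR x)) y := by
        have := ((innerSL ℝ (gradR x)).hasFDerivAt (x := id y - x)).comp y
          ((hasFDerivAt_id y).sub_const x)
        exact this
      exact (((hR y).sub_const (R x)).sub h3)
    have : HasFDerivAt F _ y := h1.add h2
    refine this.congr_fderiv ?_
    ext p
    simp [real_inner_smul_left, inner_sub_left, inner_add_left]
    ring
  have hcone : z - y ∈ posTangentConeAt K y :=
    sub_mem_posTangentConeAt_of_segment_subset (hK.segment_subset hy hz)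
  have h0 : 0 ≤ (innerSL ℝ (η • g + gradR y - gradR x)) (z - y) :=
    hmin'.hasFDerivWithinAt_nonneg hderiv.hasFDerivWithinAt hcone
  have heq : ⟪η • g + gradR y - gradR x, y - z⟫
      = -((innerSL ℝ (η • g + gradR y - gradR x)) (z - y)) := by
    rw [show y - z = -(z - y) by abel]
    simp [inner_neg_right, inner_sub_left, inner_add_left, real_inner_smul_left, inner_sub_right]
    ring
  rw [heq]
  linarith
end

section
/- Let E be a real inner product space, K ⊆ E a set, x ∈ E, g ∈ E, η > 0, and let R : E → ℝ be differentiable with gradient ∇R. Suppose y ∈ K satisfies the first-order optimality condition ⟪η·g + ∇R(y) − ∇R(x), y − z⟫ ≤ 0 for all z ∈ K (as holds when y minimizes z ↦ η·⟪g, z⟫ + B_R(z‖x) over a convex set K). Then for every z ∈ K: η·⟪g, y − z⟫ ≤ B_R(z‖x) − B_R(z‖y) − B_R(y‖x). -/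
open scoped RealInnerProductSpace

/-- Lemma 5, inequality (16): the "new decision" bound of mirror descent. -/
theorem mirror_descent_new_decision_bound
    {E : Type*} [NormedAddCommGroup E] [InnerProductSpace ℝ E]
    (K : Set E) (x g : E) (η : ℝ) (hη : 0 < η)
    (R : E → ℝ) (gradR : E → E)
    (hR : ∀ p : E, HasFDerivAt R (innerSL ℝ (gradR p)) p)
    (y : E) (hy : y ∈ K)
    (hopt : ∀ z ∈ K, ⟪η • g + gradR y - gradR x, y - z⟫ ≤ 0) :
    ∀ z ∈ K, η * ⟪g, y - z⟫ ≤ breg R gradR z x - breg R gradR z y - breg R gradR y x := by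
  intro z hz
  have h := hopt z hz
  simp only [breg, inner_sub_left, inner_sub_right, inner_add_left,
    real_inner_smul_left] at h ⊢
  linarith
end

section
/- Let E be a real inner product space, K ⊆ E a set, x ∈ E, g ∈ E, η > 0, and let R : E → ℝ be differentiable with gradient ∇R and 1-strongly convex on E. Suppose y ∈ K satisfies the first-order optimality condition ⟪η·g + ∇R(y) − ∇R(x), y − z⟫ ≤ 0 for all z ∈ K (as holds when y minimizes z ↦ η·⟪g, z⟫ + B_R(z‖x) over a convex set K). Then for every z ∈ K: η·⟪g, x − z⟫ ≤ B_R(z‖x) − B_R(z‖y) + (η²/2)·‖g‖². -/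
open scoped RealInnerProductSpace

/-- `F` is `α`-strongly convex on the set `K`. -/
def StrongConvexOnSet {E : Type*} [NormedAddCommGroup E] [NormedSpace ℝ E]
    (K : Set E) (α : ℝ) (F : E → ℝ) : Prop :=
  ∀ ⦃x⦄, x ∈ K → ∀ ⦃y⦄, y ∈ K → ∀ ⦃t : ℝ⦄, 0 ≤ t → t ≤ 1 →
    F (t • x + (1 - t) • y) ≤ t * F x + (1 - t) * F y - α / 2 * t * (1 - t) * ‖x - y‖ ^ 2

/-- Gradient inequality: a convex differentiable function lies above its tangent. -/
lemma convex_grad_ineq {E : Type*} [NormedAddCommGroup E] [InnerProductSpace ℝ E]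
    {F : E → ℝ} {F' : E → E →L[ℝ] ℝ}
    (hconv : ConvexOn ℝ Set.univ F) (hd : ∀ p, HasFDerivAt F (F' p) p)
    (x z : E) : F' x (z - x) ≤ F z - F x := by
  rcases eq_or_ne z x with rfl | hzx
  · simp
  · set φ : ℝ → ℝ := fun t => F (x + t • (z - x)) with hφ
    have hφconv : ConvexOn ℝ Set.univ φ := by
      have := hconv.comp_affineMap (AffineMap.lineMap x z)
      have heq : φ = F ∘ (AffineMap.lineMap x z) := by
        funext t
        have hpt : x + t • (z - x) = AffineMap.lineMap x z t := by
          simp only [AffineMap.lineMap_apply_module]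
          module
        simp [hφ, hpt]
      rw [heq]
      simpa using this
    have hderiv : HasDerivAt φ (F' x (z - x)) 0 := by
      have h1 : HasDerivAt (fun t : ℝ => x + t • (z - x)) (z - x) 0 := by
        simpa using ((hasDerivAt_id (0:ℝ)).smul_const (z - x)).const_add x
      have hdx : HasFDerivAt F (F' x) ((fun t : ℝ => x + t • (z - x)) 0) := by
        simpa using hd x
      exact hdx.comp_hasDerivAt (0:ℝ) h1
    have hslope := hφconv.le_slope_of_hasDerivWithinAt (Set.mem_univ (0:ℝ))
      (Set.mem_univ (1:ℝ)) one_pos hderiv.hasDerivWithinAt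
    have : slope φ 0 1 = F z - F x := by
      simp [slope_def_field, hφ]
    linarith [hslope.trans_eq this]

/-- Strong convexity gives a quadratic lower bound on the Bregman divergence. -/
lemma breg_lower_bound {E : Type*} [NormedAddCommGroup E] [InnerProductSpace ℝ E]
    {R : E → ℝ} {gradR : E → E}
    (hR : ∀ p : E, HasFDerivAt R (innerSL ℝ (gradR p)) p)
    (hsc : StrongConvexOnSet (Set.univ : Set E) 1 R)
    (z x : E) : 1 / 2 * ‖z - x‖ ^ 2 ≤ breg R gradR z x := by
  set F : E → ℝ := fun w => R w - 1 / 2 * ‖w‖ ^ 2 with hF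
  have hFd : ∀ p : E, HasFDerivAt F (innerSL ℝ (gradR p - p)) p := by
    intro p
    have hn : HasFDerivAt (fun w : E => ‖w‖ ^ 2) (2 • (innerSL ℝ p)) p := by
      simpa using (hasFDerivAt_id p).norm_sq
    have := (hR p).sub (hn.const_smul (1 / 2 : ℝ))
    exact this.congr_fderiv (by
    ext w
    simp [inner_sub_left])
  have hFconv : ConvexOn ℝ Set.univ F := by
    refine ⟨convex_univ, fun a _ b _ s t hs ht hst => ?_⟩
    have hkey := hsc (Set.mem_univ a) (Set.mem_univ b) hs (by linarith)
    have ht' : 1 - s = t := by linarith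
    rw [ht'] at hkey
    have hnorm : ‖s • a + t • b‖ ^ 2
        = s * ‖a‖ ^ 2 + t * ‖b‖ ^ 2 - s * t * ‖a - b‖ ^ 2 := by
      have h1 : ‖s • a + t • b‖ ^ 2 = ⟪s • a + t • b, s • a + t • b⟫ :=
        (real_inner_self_eq_norm_sq _).symm
      have h2 : ‖a - b‖ ^ 2 = ⟪a - b, a - b⟫ := (real_inner_self_eq_norm_sq _).symm
      have h3 : ‖a‖ ^ 2 = ⟪a, a⟫ := (real_inner_self_eq_norm_sq _).symm
      have h4 : ‖b‖ ^ 2 = ⟪b, b⟫ := (real_inner_self_eq_norm_sq _).symm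
      rw [h1, h2, h3, h4]
      simp only [inner_add_add_self, inner_sub_sub_self, real_inner_smul_left,
        real_inner_smul_right]
      linear_combination (s * (⟪a, a⟫ : ℝ) + t * ⟪b, b⟫) * hst
    simp only [hF, smul_eq_mul]
    rw [hnorm]
    nlinarith
  have := convex_grad_ineq hFconv hFd x z
  simp only [hF, innerSL_apply_apply] at this
  have hexp : ‖z - x‖ ^ 2 = ‖z‖ ^ 2 - 2 * ⟪x, z - x⟫ - ‖x‖ ^ 2 := by
    have h1 : ‖z - x‖ ^ 2 = ⟪z - x, z - x⟫ := (real_inner_self_eq_norm_sq _).symm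
    have h3 : ‖z‖ ^ 2 = ⟪z, z⟫ := (real_inner_self_eq_norm_sq _).symm
    have h4 : ‖x‖ ^ 2 = ⟪x, x⟫ := (real_inner_self_eq_norm_sq _).symm
    rw [h1, h3, h4]
    simp only [inner_sub_left, inner_sub_right]
    nlinarith [real_inner_comm x z]
  have hinner : ⟪gradR x - x, z - x⟫ = ⟪gradR x, z - x⟫ - ⟪x, z - x⟫ := by
    simp [inner_sub_left]
  rw [hinner] at this
  simp only [breg]
  nlinarith

/-- Lemma 5, inequality (17): the "old decision" bound of mirror descent. -/
theorem mirror_descent_old_decision_bound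
    {E : Type*} [NormedAddCommGroup E] [InnerProductSpace ℝ E]
    (K : Set E) (x g : E) (η : ℝ) (hη : 0 < η)
    (R : E → ℝ) (gradR : E → E)
    (hR : ∀ p : E, HasFDerivAt R (innerSL ℝ (gradR p)) p)
    (hsc : StrongConvexOnSet (Set.univ : Set E) 1 R)
    (y : E) (hy : y ∈ K)
    (hopt : ∀ z ∈ K, ⟪η • g + gradR y - gradR x, y - z⟫ ≤ 0) :
    ∀ z ∈ K, η * ⟪g, x - z⟫ ≤ breg R gradR z x - breg R gradR z y + η ^ 2 / 2 * ‖g‖ ^ 2 := by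
  intro z hz
  have hopt' := hopt z hz
  -- three-point identity
  have h3pt : breg R gradR z x - breg R gradR z y - breg R gradR y x
      = ⟪gradR x - gradR y, y - z⟫ := by
    simp only [breg, inner_sub_left]
    have e1 : ⟪gradR x, z - x⟫ = ⟪gradR x, z⟫ - ⟪gradR x, x⟫ := by rw [inner_sub_right]
    have e2 : ⟪gradR y, z - y⟫ = ⟪gradR y, z⟫ - ⟪gradR y, y⟫ := by rw [inner_sub_right]
    have e3 : ⟪gradR x, y - x⟫ = ⟪gradR x, y⟫ - ⟪gradR x, x⟫ := by rw [inner_sub_right]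
    have e4 : ⟪gradR x, y - z⟫ = ⟪gradR x, y⟫ - ⟪gradR x, z⟫ := by rw [inner_sub_right]
    have e5 : ⟪gradR y, y - z⟫ = ⟪gradR y, y⟫ - ⟪gradR y, z⟫ := by rw [inner_sub_right]
    rw [e1, e2, e3, e4, e5]; ring
  have hopt2 : η * ⟪g, y - z⟫ ≤ ⟪gradR x - gradR y, y - z⟫ := by
    have : ⟪η • g + gradR y - gradR x, y - z⟫
        = η * ⟪g, y - z⟫ - ⟪gradR x - gradR y, y - z⟫ := by
      simp only [inner_sub_left, inner_add_left, real_inner_smul_left]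
      ring
    linarith [hopt', this ▸ hopt']
  have hbyx : 1 / 2 * ‖y - x‖ ^ 2 ≤ breg R gradR y x := breg_lower_bound hR hsc y x
  -- Young's inequality part
  have hyoung : η * ⟪g, x - y⟫ ≤ η ^ 2 / 2 * ‖g‖ ^ 2 + 1 / 2 * ‖y - x‖ ^ 2 := by
    have hcs : ⟪g, x - y⟫ ≤ ‖g‖ * ‖x - y‖ := real_inner_le_norm g (x - y)
    have hn : ‖x - y‖ = ‖y - x‖ := by rw [← norm_neg]; congr 1; abel
    have h0 : 0 ≤ (η * ‖g‖ - ‖y - x‖) ^ 2 := sq_nonneg _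
    have hcs' : η * ⟪g, x - y⟫ ≤ η * (‖g‖ * ‖y - x‖) := by
      rw [← hn]; exact mul_le_mul_of_nonneg_left hcs hη.le
    nlinarith [hcs', h0]
  have hsplit : ⟪g, x - z⟫ = ⟪g, x - y⟫ + ⟪g, y - z⟫ := by
    rw [← inner_add_right]; congr 1; abel
  rw [hsplit]
  have : η * ⟪g, x - y⟫ + η * ⟪g, y - z⟫
      ≤ (η ^ 2 / 2 * ‖g‖ ^ 2 + breg R gradR y x)
        + (breg R gradR z x - breg R gradR z y - breg R gradR y x) := by
    have := h3pt ▸ hopt2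
    linarith
  linarith [this]
end

section
/- (PicCoLO with mirror descent.) Let E be a real inner product space and Π ⊆ E a nonempty convex set. Fix N ≥ 1, weights w_1, …, w_N > 0, vectors g_1, …, g_N and ĝ_1, …, ĝ_N in E, and set e_n := g_n − ĝ_n. Let R_0, R_1, …, R_N : E → ℝ be differentiable, with each R_n being α_n-strongly convex on E where α_n > 0, and let M_N ∈ ℝ. Suppose π̂_1, …, π̂_{N+1} ∈ Π and π_1, …, π_N ∈ Π satisfy, for every n = 1, …, N and every π ∈ Π: (i) ⟪w_n·ĝ_n + ∇R_{n−1}(π_n) − ∇R_{n−1}(π̂_n), π_n − π⟫ ≤ 0; (ii) ⟪w_n·e_n + ∇R_n(π̂_{n+1}) − ∇R_n(π_n), π̂_{n+1} − π⟫ ≤ 0; and (iii) B_{R_0}(π‖π̂_1) + Σ_{n=1}^N (B_{R_n}(π‖π_n) − B_{R_{n−1}}(π‖π_n)) ≤ M_N. Then for every π ∈ Π: Σ_{n=1}^N w_n·⟪g_n, π_n − π⟫ ≤ M_N + Σ_{n=1}^N ( (w_n²/(2α_n))·‖e_n‖² − (α_{n−1}/2)·‖π_n − π̂_n‖² ). 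-/
open scoped RealInnerProductSpace

lemma three_point {E : Type*} [NormedAddCommGroup E] [InnerProductSpace ℝ E]
    (R : E → ℝ) (gr : E → E) (q x y : E) :
    ⟪gr x - gr y, y - q⟫ = breg R gr q x - breg R gr q y - breg R gr y x := by
  simp only [breg, inner_sub_left, inner_sub_right]
  ring

lemma sc_breg_lb {E : Type*} [NormedAddCommGroup E] [InnerProductSpace ℝ E]
    {R : E → ℝ} {gradR : E → E} {α : ℝ}
    (h : StrongConvexOnSet (Set.univ : Set E) α R)
    (hd : ∀ p : E, HasFDerivAt R (innerSL ℝ (gradR p)) p) (z x : E) :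
    α / 2 * ‖z - x‖ ^ 2 ≤ breg R gradR z x := by
  set v := z - x with hv
  set φ : ℝ → ℝ := fun t => R (x + t • v) with hφdef
  have hline : HasDerivAt (fun t : ℝ => x + t • v) v 0 := by
    simpa using ((hasDerivAt_id (0:ℝ)).smul_const v).const_add x
  have hφ : HasDerivAt φ ⟪gradR x, v⟫ 0 := by
    have := (hd (x + (0:ℝ) • v)).comp_hasDerivAt 0 hline
    simpa [hφdef, Function.comp_def] using this
  have hslope : ∀ t : ℝ, 0 < t → t ≤ 1 →
      slope φ 0 t ≤ (R z - R x) - α / 2 * (1 - t) * ‖v‖ ^ 2 := by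
    intro t ht ht1
    have hsc := h (Set.mem_univ z) (Set.mem_univ x) ht.le ht1
    rw [← hv] at hsc
    have hpt : t • z + (1 - t) • x = x + t • v := by rw [hv]; module
    rw [hpt] at hsc
    have h0 : φ 0 = R x := by simp [hφdef]
    rw [slope_def_field, h0, sub_zero, div_le_iff₀ ht]
    have hφt : φ t = R (x + t • v) := rfl
    nlinarith [hsc]
  have hlim1 : Filter.Tendsto (slope φ 0) (nhdsWithin 0 (Set.Ioi 0)) (nhds ⟪gradR x, v⟫) :=
    (hasDerivAt_iff_tendsto_slope.mp hφ).mono_left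
      (nhdsWithin_mono 0 (fun t ht => Set.mem_compl_singleton_iff.mpr (ne_of_gt ht)))
  have hlim2 : Filter.Tendsto (fun t : ℝ => (R z - R x) - α / 2 * (1 - t) * ‖v‖ ^ 2)
      (nhdsWithin 0 (Set.Ioi 0)) (nhds ((R z - R x) - α / 2 * ‖v‖ ^ 2)) := by
    have hc : ContinuousAt (fun t : ℝ => (R z - R x) - α / 2 * (1 - t) * ‖v‖ ^ 2) 0 := by
      fun_prop
    have := hc.tendsto.mono_left (nhdsWithin_le_nhds (s := Set.Ioi (0:ℝ)))
    simpa using this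
  have hev : ∀ᶠ t in nhdsWithin (0:ℝ) (Set.Ioi 0),
      slope φ 0 t ≤ (R z - R x) - α / 2 * (1 - t) * ‖v‖ ^ 2 := by
    filter_upwards [Ioc_mem_nhdsGT_of_mem (Set.left_mem_Ico.mpr zero_lt_one)] with t ht
    exact hslope t ht.1 ht.2
  have := le_of_tendsto_of_tendsto hlim1 hlim2 hev
  rw [breg, ← hv]
  linarith
/-- Regret bound of PicCoLO with a mirror-descent base algorithm
(Proposition 1 / Theorem 1).  `π n` is the Prediction-Step decision,
`πh n` is `π̂_n`, and `e n = g n − ĝ n` is written inline. -/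
theorem piccolo_mirror_descent_regret
    {E : Type*} [NormedAddCommGroup E] [InnerProductSpace ℝ E]
    (Pset : Set E) (hne : Pset.Nonempty) (hconv : Convex ℝ Pset)
    (N : ℕ) (hN : 1 ≤ N)
    (w : ℕ → ℝ) (hw : ∀ n, 1 ≤ n → n ≤ N → 0 < w n)
    (g ghat : ℕ → E)
    (R : ℕ → E → ℝ) (gradR : ℕ → E → E)
    (hR : ∀ n, n ≤ N → ∀ p : E, HasFDerivAt (R n) (innerSL ℝ (gradR n p)) p)
    (α : ℕ → ℝ) (hα : ∀ n, n ≤ N → 0 < α n)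
    (hsc : ∀ n, n ≤ N → StrongConvexOnSet (Set.univ : Set E) (α n) (R n))
    (MN : ℝ) (πh π : ℕ → E)
    (hπh : ∀ n, 1 ≤ n → n ≤ N + 1 → πh n ∈ Pset)
    (hπ : ∀ n, 1 ≤ n → n ≤ N → π n ∈ Pset)
    (hpred : ∀ n, 1 ≤ n → n ≤ N → ∀ q ∈ Pset,
      ⟪w n • ghat n + gradR (n - 1) (π n) - gradR (n - 1) (πh n), π n - q⟫ ≤ 0)
    (hcorr : ∀ n, 1 ≤ n → n ≤ N → ∀ q ∈ Pset,
      ⟪w n • (g n - ghat n) + gradR n (πh (n + 1)) - gradR n (π n), πh (n + 1) - q⟫ ≤ 0)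
    (hreg : ∀ q ∈ Pset,
      breg (R 0) (gradR 0) q (πh 1)
        + ∑ n ∈ Finset.Icc 1 N,
            (breg (R n) (gradR n) q (π n) - breg (R (n - 1)) (gradR (n - 1)) q (π n)) ≤ MN) :
    ∀ q ∈ Pset,
      ∑ n ∈ Finset.Icc 1 N, w n * ⟪g n, π n - q⟫
        ≤ MN + ∑ n ∈ Finset.Icc 1 N,
            ((w n) ^ 2 / (2 * α n) * ‖g n - ghat n‖ ^ 2
              - α (n - 1) / 2 * ‖π n - πh n‖ ^ 2) := by
  intro q hq
  set T : ℕ → ℝ := fun m => breg (R m) (gradR m) q (πh (m + 1)) with hT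
  have key : ∀ n ∈ Finset.Icc 1 N,
      w n * ⟪g n, π n - q⟫ ≤
        (T (n - 1) - T n)
        + (breg (R n) (gradR n) q (π n) - breg (R (n - 1)) (gradR (n - 1)) q (π n))
        + ((w n) ^ 2 / (2 * α n) * ‖g n - ghat n‖ ^ 2
            - α (n - 1) / 2 * ‖π n - πh n‖ ^ 2) := by
    intro n hn
    obtain ⟨hn1, hnN⟩ := Finset.mem_Icc.mp hn
    have hsub : n - 1 + 1 = n := Nat.sub_add_cancel hn1
    have hn1N : n - 1 ≤ N := le_trans (Nat.sub_le n 1) hnN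
    have hTn1 : T (n - 1) = breg (R (n - 1)) (gradR (n - 1)) q (πh n) := by
      rw [hT]; simp only [hsub]
    have hp := hpred n hn1 hnN q hq
    have hc := hcorr n hn1 hnN q hq
    have tp1 := three_point (R (n - 1)) (gradR (n - 1)) q (πh n) (π n)
    have tp2 := three_point (R n) (gradR n) q (π n) (πh (n + 1))
    have lb1 : α (n - 1) / 2 * ‖π n - πh n‖ ^ 2
        ≤ breg (R (n - 1)) (gradR (n - 1)) (π n) (πh n) :=
      sc_breg_lb (hsc _ hn1N) (hR _ hn1N) _ _
    have lb2 : α n / 2 * ‖πh (n + 1) - π n‖ ^ 2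
        ≤ breg (R n) (gradR n) (πh (n + 1)) (π n) :=
      sc_breg_lb (hsc _ hnN) (hR _ hnN) _ _
    have hwn := hw n hn1 hnN
    have hαn := hα n hnN
    have cs : ⟪w n • (g n - ghat n), π n - πh (n + 1)⟫
        ≤ (w n) ^ 2 / (2 * α n) * ‖g n - ghat n‖ ^ 2
          + α n / 2 * ‖πh (n + 1) - π n‖ ^ 2 := by
      have h1 : ⟪w n • (g n - ghat n), π n - πh (n + 1)⟫
          = w n * ⟪g n - ghat n, π n - πh (n + 1)⟫ := real_inner_smul_left _ _ _
      have h2 : ⟪g n - ghat n, π n - πh (n + 1)⟫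
          ≤ ‖g n - ghat n‖ * ‖π n - πh (n + 1)‖ := real_inner_le_norm _ _
      have h3 : ‖π n - πh (n + 1)‖ = ‖πh (n + 1) - π n‖ := norm_sub_rev _ _
      rw [h1]
      have h4 : w n * ⟪g n - ghat n, π n - πh (n + 1)⟫
          ≤ w n * (‖g n - ghat n‖ * ‖πh (n + 1) - π n‖) := by
        rw [← h3]; exact mul_le_mul_of_nonneg_left h2 hwn.le
      refine h4.trans ?_
      rw [div_mul_eq_mul_div, div_add' _ _ _ (by positivity), le_div_iff₀ (by positivity)]
      nlinarith [sq_nonneg (w n * ‖g n - ghat n‖ - α n * ‖πh (n + 1) - π n‖)]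
    have dec : w n * ⟪g n, π n - q⟫
        = ⟪w n • ghat n, π n - q⟫ + ⟪w n • (g n - ghat n), π n - πh (n + 1)⟫
          + ⟪w n • (g n - ghat n), πh (n + 1) - q⟫ := by
      simp only [real_inner_smul_left, inner_sub_left, inner_sub_right]
      ring
    simp only [inner_add_left, inner_sub_left] at hp hc
    simp only [inner_sub_left] at tp1 tp2
    rw [hTn1]
    linarith [hp, hc, tp1, tp2, lb1, lb2, cs, dec]
  have hsum := Finset.sum_le_sum key
  have htel : ∑ n ∈ Finset.Icc 1 N, (T (n - 1) - T n) = T 0 - T N := by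
    rw [← Finset.Ico_add_one_right_eq_Icc, Finset.sum_Ico_eq_sum_range]
    simp only [Nat.succ_sub_one, Nat.add_comm 1]
    exact Finset.sum_range_sub' T N
  have hTN : (0 : ℝ) ≤ T N := by
    have := sc_breg_lb (hsc N le_rfl) (hR N le_rfl) q (πh (N + 1))
    have h0 : (0 : ℝ) ≤ α N / 2 * ‖q - πh (N + 1)‖ ^ 2 :=
      mul_nonneg (by linarith [hα N le_rfl]) (by positivity)
    exact h0.trans this
  have hregq := hreg q hq
  rw [Finset.sum_add_distrib, Finset.sum_add_distrib, htel] at hsum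
  have hT0 : T 0 = breg (R 0) (gradR 0) q (πh 1) := rfl
  linarith [hsum, hregq, hTN]
end

section
/- (PicCoLO with FTRL.) Let E be a real inner product space and Π ⊆ E a nonempty convex set. Fix N ≥ 1, weights w_1, …, w_N > 0, vectors g_1, …, g_N and ĝ_1, …, ĝ_N in E, and set e_n := g_n − ĝ_n. Let r_1, …, r_N : E → ℝ be convex and differentiable, let M_N ∈ ℝ, let α_1, …, α_N > 0 and set α_0 := 0. Let π̂_1 ∈ Π and, for n = 1, …, N, let π_n, π̂_{n+1} ∈ Π. Define f_n(π) := w_n·⟪g_n, π⟫ + B_{r_n}(π‖π_n). Assume for every n = 1, …, N: (i) π_n minimizes π ↦ w_n·⟪ĝ_n, π⟫ + Σ_{m=1}^{n−1} f_m(π) over Π; (ii) π̂_{n+1} minimizes Σ_{m=1}^{n} f_m over Π; (iii) the function π ↦ Σ_{m=1}^{n} B_{r_m}(π‖π_m) is α_n-strongly convex on Π; and (iv) Σ_{n=1}^N B_{r_n}(π‖π_n) ≤ M_N for all π ∈ Π. Then for every π ∈ Π: Σ_{n=1}^N w_n·⟪g_n, π_n − π⟫ ≤ M_N + Σ_{n=1}^N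 ( (w_n²/(2α_n))·‖e_n‖² − (α_{n−1}/2)·‖π_n − π̂_n‖² ). -/
open scoped RealInnerProductSpace

section Aux
variable {E : Type*} [NormedAddCommGroup E] [InnerProductSpace ℝ E]

/-- A convex differentiable function lies above its tangent planes, i.e. the Bregman
divergence it generates is nonnegative. -/
lemma breg_nonneg {R : E → ℝ} {gradR : E → E}
    (hconv : ConvexOn ℝ (Set.univ : Set E) R)
    (hdiff : ∀ p : E, HasFDerivAt R (innerSL ℝ (gradR p)) p)
    (z x : E) : 0 ≤ breg R gradR z x := by
  set φ : ℝ → ℝ := fun t => R (x + t • (z - x)) with hφ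
  have hline : HasDerivAt (fun t : ℝ => x + t • (z - x)) (z - x) 0 := by
    simpa using (((hasDerivAt_id (0:ℝ)).smul_const (z - x)).const_add x)
  have hd : HasDerivAt φ ⟪gradR x, z - x⟫ 0 := by
    have hfd : HasFDerivAt R (innerSL ℝ (gradR x)) ((fun t : ℝ => x + t • (z - x)) 0) := by
      simpa using hdiff x
    exact hfd.comp_hasDerivAt 0 hline
  have hφconv : ConvexOn ℝ (Set.univ : Set ℝ) φ := by
    have h := hconv.comp_affineMap (AffineMap.lineMap x z)
    have hfe : φ = R ∘ (AffineMap.lineMap x z : ℝ →ᵃ[ℝ] E) := by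
      funext t
      simp only [hφ, Function.comp_apply, AffineMap.lineMap_apply_module]
      congr 1
      module
    rw [hfe]
    simpa using h
  have hs := hφconv.le_slope_of_hasDerivAt (Set.mem_univ (0:ℝ)) (Set.mem_univ 1) one_pos hd
  have hsl : slope φ 0 1 = R z - R x := by
    simp [slope_def_field, hφ]
  rw [hsl] at hs
  simp only [breg]
  linarith

/-- At a minimizer of an `α`-strongly convex function on a convex set, the function grows at
least quadratically. -/
lemma strong_min {K : Set E} (hK : Convex ℝ K) {α : ℝ} {F : E → ℝ}
    (hF : StrongConvexOnSet K α F) {x : E} (hx : x ∈ K)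
    (hmin : ∀ y ∈ K, F x ≤ F y) :
    ∀ y ∈ K, F x + α / 2 * ‖y - x‖ ^ 2 ≤ F y := by
  intro y hy
  by_contra hcon
  push_neg at hcon
  set A : ℝ := α / 2 * ‖y - x‖ ^ 2 with hA
  set D : ℝ := F y - F x with hD
  have hDnn : 0 ≤ D := by
    have := hmin y hy; simp only [hD]; linarith
  have hDA : D < A := by simp only [hD, hA]; linarith
  have hApos : 0 < A := lt_of_le_of_lt hDnn hDA
  set t : ℝ := (A - D) / (2 * A) with ht
  have ht0 : 0 < t := by
    apply div_pos (by linarith) (by linarith)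
  have ht1 : t ≤ 1 := by
    rw [ht, div_le_one (by linarith)]; linarith
  have hmem : t • y + (1 - t) • x ∈ K := hK hy hx (le_of_lt ht0) (by linarith) (by ring)
  have h1 := hF hy hx (le_of_lt ht0) ht1
  have h2 := hmin _ hmem
  have key : t * ((1 - t) * A) ≤ t * D := by
    have : α / 2 * t * (1 - t) * ‖y - x‖ ^ 2 = t * ((1 - t) * A) := by
      rw [hA]; ring
    nlinarith [h1, h2]
  have key2 : (1 - t) * A ≤ D := le_of_mul_le_mul_left (by linarith [key]) ht0
  have h1t : (1 - t) * A = (A + D) / 2 := by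
    field_simp [ht]
    rw [ht]; field_simp; ring
  rw [h1t] at key2
  linarith

/-- Adding an affine function preserves strong convexity. -/
lemma StrongConvexOnSet.add_affine {K : Set E} {α : ℝ} {F L : E → ℝ}
    (hF : StrongConvexOnSet K α F)
    (hL : ∀ (x y : E) (t : ℝ), L (t • x + (1 - t) • y) = t * L x + (1 - t) * L y) :
    StrongConvexOnSet K α (fun p => F p + L p) := by
  intro x hx y hy t ht0 ht1
  have h1 := hF hx hy ht0 ht1
  have h2 := hL x y t
  dsimp only
  linarith

lemma sum_linear_comb (s : Finset ℕ) (c : ℕ → ℝ) (u : ℕ → E) (x y : E) (t : ℝ) :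
    ∑ m ∈ s, c m * ⟪u m, t • x + (1 - t) • y⟫
      = t * ∑ m ∈ s, c m * ⟪u m, x⟫ + (1 - t) * ∑ m ∈ s, c m * ⟪u m, y⟫ := by
  rw [Finset.mul_sum, Finset.mul_sum, ← Finset.sum_add_distrib]
  refine Finset.sum_congr rfl fun m _ => ?_
  rw [inner_add_right, real_inner_smul_right, real_inner_smul_right]
  ring

end Aux

/-- Regret bound of PicCoLO with an FTRL base algorithm (Proposition 2).
`f_n(q) = w_n⟪g_n, q⟫ + B_{r_n}(q‖π_n)` is written inline;
`π n` is the Prediction-Step decision and `πh (n+1)` the Correction-Step one. -/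
theorem piccolo_ftrl_regret
    {E : Type*} [NormedAddCommGroup E] [InnerProductSpace ℝ E]
    (Pset : Set E) (hne : Pset.Nonempty) (hconv : Convex ℝ Pset)
    (N : ℕ) (hN : 1 ≤ N)
    (w : ℕ → ℝ) (hw : ∀ n, 1 ≤ n → n ≤ N → 0 < w n)
    (g ghat : ℕ → E)
    (r : ℕ → E → ℝ) (gradr : ℕ → E → E)
    (hrconv : ∀ n, 1 ≤ n → n ≤ N → ConvexOn ℝ (Set.univ : Set E) (r n))
    (hrdiff : ∀ n, 1 ≤ n → n ≤ N → ∀ p : E, HasFDerivAt (r n) (innerSL ℝ (gradr n p)) p)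
    (MN : ℝ) (α : ℕ → ℝ) (hα0 : α 0 = 0) (hα : ∀ n, 1 ≤ n → n ≤ N → 0 < α n)
    (πh π : ℕ → E)
    (hπh1 : πh 1 ∈ Pset)
    (hπ : ∀ n, 1 ≤ n → n ≤ N → π n ∈ Pset)
    (hπh : ∀ n, 1 ≤ n → n ≤ N → πh (n + 1) ∈ Pset)
    (hpred : ∀ n, 1 ≤ n → n ≤ N → ∀ q ∈ Pset,
      w n * ⟪ghat n, π n⟫
          + ∑ m ∈ Finset.Icc 1 (n - 1),
              (w m * ⟪g m, π n⟫ + breg (r m) (gradr m) (π n) (π m))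
        ≤ w n * ⟪ghat n, q⟫
          + ∑ m ∈ Finset.Icc 1 (n - 1),
              (w m * ⟪g m, q⟫ + breg (r m) (gradr m) q (π m)))
    (hcorr : ∀ n, 1 ≤ n → n ≤ N → ∀ q ∈ Pset,
      ∑ m ∈ Finset.Icc 1 n,
          (w m * ⟪g m, πh (n + 1)⟫ + breg (r m) (gradr m) (πh (n + 1)) (π m))
        ≤ ∑ m ∈ Finset.Icc 1 n,
            (w m * ⟪g m, q⟫ + breg (r m) (gradr m) q (π m)))
    (hsc : ∀ n, 1 ≤ n → n ≤ N →
      StrongConvexOnSet Pset (α n)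
        (fun q => ∑ m ∈ Finset.Icc 1 n, breg (r m) (gradr m) q (π m)))
    (hreg : ∀ q ∈ Pset, ∑ n ∈ Finset.Icc 1 N, breg (r n) (gradr n) q (π n) ≤ MN) :
    ∀ q ∈ Pset,
      ∑ n ∈ Finset.Icc 1 N, w n * ⟪g n, π n - q⟫
        ≤ MN + ∑ n ∈ Finset.Icc 1 N,
            ((w n) ^ 2 / (2 * α n) * ‖g n - ghat n‖ ^ 2
              - α (n - 1) / 2 * ‖π n - πh n‖ ^ 2) := by
  intro q hq
  have hBnn : ∀ n, 1 ≤ n → n ≤ N → ∀ p : E, 0 ≤ breg (r n) (gradr n) p (π n) :=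
    fun n h1 h2 p => breg_nonneg (hrconv n h1 h2) (hrdiff n h1 h2) p (π n)
  have hB0 : ∀ n, breg (r n) (gradr n) (π n) (π n) = 0 := by
    intro n; simp [breg]
  set Φ : ℕ → E → ℝ :=
    fun n p => ∑ m ∈ Finset.Icc 1 n, (w m * ⟪g m, p⟫ + breg (r m) (gradr m) p (π m)) with hΦdef
  have hΦ : ∀ n p, Φ n p
      = ∑ m ∈ Finset.Icc 1 n, (w m * ⟪g m, p⟫ + breg (r m) (gradr m) p (π m)) :=
    fun n p => rfl
  have hΦ0 : ∀ p, Φ 0 p = 0 := by intro p; simp [hΦ]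
  have hΦsucc : ∀ k p, Φ (k+1) p
      = Φ k p + (w (k+1) * ⟪g (k+1), p⟫ + breg (r (k+1)) (gradr (k+1)) p (π (k+1))) := by
    intro k p
    rw [hΦ, hΦ, Finset.sum_Icc_succ_top (by omega)]
  -- strong convexity of Φ k
  have hΦsc : ∀ k, 1 ≤ k → k ≤ N → StrongConvexOnSet Pset (α k) (Φ k) := by
    intro k h1 h2
    have h := (hsc k h1 h2).add_affine
      (L := fun p => ∑ m ∈ Finset.Icc 1 k, w m * ⟪g m, p⟫)
      (fun x y t => sum_linear_comb _ _ _ x y t)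
    have hEq : (fun p => (∑ m ∈ Finset.Icc 1 k, breg (r m) (gradr m) p (π m))
        + ∑ m ∈ Finset.Icc 1 k, w m * ⟪g m, p⟫) = Φ k := by
      funext p
      rw [hΦ, ← Finset.sum_add_distrib]
      exact Finset.sum_congr rfl fun m _ => by ring
    rwa [hEq] at h
  -- correction-step minimizer inequality
  have hcorrmin : ∀ k, 1 ≤ k → k ≤ N → ∀ y ∈ Pset,
      Φ k (πh (k+1)) + α k / 2 * ‖y - πh (k+1)‖ ^ 2 ≤ Φ k y := by
    intro k h1 h2
    refine strong_min hconv (hΦsc k h1 h2) (hπh k h1 h2) ?_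
    intro y hy
    have h := hcorr k h1 h2 y hy
    rw [hΦ, hΦ]
    exact h
  -- prediction-step minimizer inequality (for the α n-strongly convex auxiliary function)
  have hHmin : ∀ n, 1 ≤ n → n ≤ N → ∀ y ∈ Pset,
      (w n * ⟪ghat n, π n⟫ + Φ (n-1) (π n) + breg (r n) (gradr n) (π n) (π n))
          + α n / 2 * ‖y - π n‖ ^ 2
        ≤ w n * ⟪ghat n, y⟫ + Φ (n-1) y + breg (r n) (gradr n) y (π n) := by
    intro n h1 h2
    obtain ⟨k, rfl⟩ : ∃ k, n = k + 1 := ⟨n - 1, by omega⟩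
    have hk : k + 1 - 1 = k := by omega
    rw [hk]
    have hscF : StrongConvexOnSet Pset (α (k+1))
        (fun p => w (k+1) * ⟪ghat (k+1), p⟫ + Φ k p
          + breg (r (k+1)) (gradr (k+1)) p (π (k+1))) := by
      have h := (hsc (k+1) (by omega) h2).add_affine
        (L := fun p => w (k+1) * ⟪ghat (k+1), p⟫ + ∑ m ∈ Finset.Icc 1 k, w m * ⟪g m, p⟫)
        (fun x y t => by
          rw [sum_linear_comb, inner_add_right, real_inner_smul_right, real_inner_smul_right]
          ring)
      have hEq : (fun p => (∑ m ∈ Finset.Icc 1 (k+1), breg (r m) (gradr m) p (π m))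
          + (w (k+1) * ⟪ghat (k+1), p⟫ + ∑ m ∈ Finset.Icc 1 k, w m * ⟪g m, p⟫))
          = (fun p => w (k+1) * ⟪ghat (k+1), p⟫ + Φ k p
              + breg (r (k+1)) (gradr (k+1)) p (π (k+1))) := by
        funext p
        rw [Finset.sum_Icc_succ_top (by omega : 1 ≤ k+1), hΦ, Finset.sum_add_distrib]
        ring
      rwa [hEq] at h
    have hmin : ∀ y ∈ Pset,
        (fun p => w (k+1) * ⟪ghat (k+1), p⟫ + Φ k p
          + breg (r (k+1)) (gradr (k+1)) p (π (k+1))) (π (k+1))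
        ≤ (fun p => w (k+1) * ⟪ghat (k+1), p⟫ + Φ k p
          + breg (r (k+1)) (gradr (k+1)) p (π (k+1))) y := by
      intro y hy
      have hp := hpred (k+1) (by omega) h2 y hy
      rw [hk] at hp
      have hb := hBnn (k+1) (by omega) h2 y
      have hb0 := hB0 (k+1)
      dsimp only
      rw [hΦ, hΦ]
      linarith
    have h := strong_min hconv hscF (hπ (k+1) (by omega) h2) hmin
    intro y hy
    have := h y hy
    simpa using this
  -- telescoping
  have htel : ∀ M : ℕ, ∑ n ∈ Finset.Icc 1 M, (Φ (n-1) (πh n) - Φ n (πh (n+1)))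
      = Φ 0 (πh 1) - Φ M (πh (M+1)) := by
    intro M
    induction M with
    | zero => simp
    | succ k ih =>
      rw [Finset.sum_Icc_succ_top (by omega), ih]
      simp only [Nat.add_sub_cancel]
      ring
  -- per-step bound
  have hterm : ∀ n ∈ Finset.Icc 1 N,
      (w n * ⟪g n, π n⟫ + breg (r n) (gradr n) (π n) (π n)) + Φ (n-1) (πh n) - Φ n (πh (n+1))
      ≤ (w n) ^ 2 / (2 * α n) * ‖g n - ghat n‖ ^ 2 - α (n-1) / 2 * ‖π n - πh n‖ ^ 2 := by
    intro n hn
    rw [Finset.mem_Icc] at hn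
    obtain ⟨h1, h2⟩ := hn
    have ha : Φ (n-1) (πh n) + α (n-1) / 2 * ‖π n - πh n‖ ^ 2 ≤ Φ (n-1) (π n) := by
      rcases Nat.lt_or_ge n 2 with hlt | hge
      · have hn1 : n = 1 := by omega
        subst hn1
        simp [hΦ0, hα0]
      · obtain ⟨k, rfl⟩ : ∃ k, n = k + 1 := ⟨n - 1, by omega⟩
        have hk : k + 1 - 1 = k := by omega
        rw [hk]
        exact hcorrmin k (by omega) (by omega) (π (k+1)) (hπ (k+1) h1 h2)
    have hb := hHmin n h1 h2 (πh (n+1)) (hπh n h1 h2)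
    have hsucc1 : Φ n (π n) = Φ (n-1) (π n)
        + (w n * ⟪g n, π n⟫ + breg (r n) (gradr n) (π n) (π n)) := by
      obtain ⟨k, rfl⟩ : ∃ k, n = k + 1 := ⟨n - 1, by omega⟩
      have hk : k + 1 - 1 = k := by omega
      rw [hk, hΦsucc]
    have hc : Φ n (π n) - Φ n (πh (n+1)) =
        w n * ⟪g n - ghat n, π n - πh (n+1)⟫
        + ((w n * ⟪ghat n, π n⟫ + Φ (n-1) (π n) + breg (r n) (gradr n) (π n) (π n))
           - (w n * ⟪ghat n, πh (n+1)⟫ + Φ (n-1) (πh (n+1))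
              + breg (r n) (gradr n) (πh (n+1)) (π n))) := by
      obtain ⟨k, rfl⟩ : ∃ k, n = k + 1 := ⟨n - 1, by omega⟩
      have hk : k + 1 - 1 = k := by omega
      rw [hk, hΦsucc, hΦsucc]
      simp only [inner_sub_left, inner_sub_right]
      ring
    have hcs : ⟪g n - ghat n, π n - πh (n+1)⟫ ≤ ‖g n - ghat n‖ * ‖π n - πh (n+1)‖ :=
      real_inner_le_norm _ _
    have hwpos := hw n h1 h2
    have hαpos := hα n h1 h2
    have he : w n * (‖g n - ghat n‖ * ‖π n - πh (n+1)‖) - α n / 2 * ‖π n - πh (n+1)‖ ^ 2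
        ≤ (w n) ^ 2 / (2 * α n) * ‖g n - ghat n‖ ^ 2 := by
      have hre : (w n) ^ 2 / (2 * α n) * ‖g n - ghat n‖ ^ 2
          = (w n) ^ 2 * ‖g n - ghat n‖ ^ 2 / (2 * α n) := by ring
      rw [hre, le_div_iff₀ (by linarith)]
      nlinarith [sq_nonneg (w n * ‖g n - ghat n‖ - α n * ‖π n - πh (n+1)‖)]
    have hwcs : w n * ⟪g n - ghat n, π n - πh (n+1)⟫
        ≤ w n * (‖g n - ghat n‖ * ‖π n - πh (n+1)‖) :=
      mul_le_mul_of_nonneg_left hcs (le_of_lt hwpos)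
    have hnorm : ‖πh (n+1) - π n‖ = ‖π n - πh (n+1)‖ := norm_sub_rev _ _
    rw [hnorm] at hb
    linarith
  -- assemble
  have hsum := Finset.sum_le_sum hterm
  have hcorrN : Φ N (πh (N+1)) ≤ Φ N q := by
    have h := hcorr N hN le_rfl q hq
    rw [hΦ, hΦ]
    exact h
  have hregq := hreg q hq
  have e1 : ∑ n ∈ Finset.Icc 1 N, w n * ⟪g n, π n - q⟫
      = (∑ n ∈ Finset.Icc 1 N, w n * ⟪g n, π n⟫)
        - ∑ n ∈ Finset.Icc 1 N, w n * ⟪g n, q⟫ := by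
    rw [← Finset.sum_sub_distrib]
    exact Finset.sum_congr rfl fun n _ => by rw [inner_sub_right]; ring
  have e2 : Φ N q = (∑ n ∈ Finset.Icc 1 N, w n * ⟪g n, q⟫)
      + ∑ n ∈ Finset.Icc 1 N, breg (r n) (gradr n) q (π n) := by
    rw [hΦ, Finset.sum_add_distrib]
  have eq3 : ∑ n ∈ Finset.Icc 1 N,
      ((w n * ⟪g n, π n⟫ + breg (r n) (gradr n) (π n) (π n)) + Φ (n-1) (πh n) - Φ n (πh (n+1)))
      = (∑ n ∈ Finset.Icc 1 N, w n * ⟪g n, π n⟫) - Φ N (πh (N+1)) := by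
    have e5 : ∀ n ∈ Finset.Icc 1 N,
        (w n * ⟪g n, π n⟫ + breg (r n) (gradr n) (π n) (π n)) + Φ (n-1) (πh n) - Φ n (πh (n+1))
        = w n * ⟪g n, π n⟫ + (Φ (n-1) (πh n) - Φ n (πh (n+1))) := by
      intro n _
      rw [hB0 n]
      ring
    rw [Finset.sum_congr rfl e5, Finset.sum_add_distrib, htel N, hΦ0]
    ring
  rw [eq3] at hsum
  linarith [hsum, hcorrN, hregq, e1, e2]
end

section
/- (Stronger FTL Lemma.) Let Π be a nonempty set, N ≥ 1, and let l_1, …, l_N : Π → ℝ. Let π_1, …, π_N ∈ Π be arbitrary, and for each n let π_n^⋆ ∈ Π satisfy l_{1:n}(π_n^⋆) ≤ l_{1:n}(π) for all π ∈ Π. Define Δ_1 := 0 and, for n ≥ 2, Δ_n := l_{1:n−1}(π_n) − l_{1:n−1}(π_{n−1}^⋆). Then Δ_n ≥ 0 for every n, and the exact identity holds: Σ_{n=1}^N l_n(π_n) − l_{1:N}(π_N^⋆) = Σ_{n=1}^N ( l_{1:n}(π_n) − l_{1:n}(π_n^⋆) − Δ_n ). -/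
/-- Stronger FTL Lemma: with `Δ_1 = 0` and
`Δ_n = l_{1:n−1}(π_n) − l_{1:n−1}(π_{n−1}^⋆)` for `n ≥ 2`, each `Δ_n` is
nonnegative and the regret equals
`∑_{n=1}^N (l_{1:n}(π_n) − l_{1:n}(π_n^⋆) − Δ_n)` exactly. -/
theorem stronger_ftl_lemma {P : Type*} [Nonempty P] (N : ℕ) (hN : 1 ≤ N)
    (l : ℕ → P → ℝ) (π πstar : ℕ → P)
    (hstar : ∀ n, 1 ≤ n → n ≤ N → ∀ q : P,
      ∑ m ∈ Finset.Icc 1 n, l m (πstar n) ≤ ∑ m ∈ Finset.Icc 1 n, l m q)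
    (Δ : ℕ → ℝ) (hΔ1 : Δ 1 = 0)
    (hΔ : ∀ n, 2 ≤ n → n ≤ N →
      Δ n = (∑ m ∈ Finset.Icc 1 (n - 1), l m (π n))
              - ∑ m ∈ Finset.Icc 1 (n - 1), l m (πstar (n - 1))) :
    (∀ n, 1 ≤ n → n ≤ N → 0 ≤ Δ n) ∧
      (∑ n ∈ Finset.Icc 1 N, l n (π n)) - ∑ m ∈ Finset.Icc 1 N, l m (πstar N)
        = ∑ n ∈ Finset.Icc 1 N,
            ((∑ m ∈ Finset.Icc 1 n, l m (π n))
              - (∑ m ∈ Finset.Icc 1 n, l m (πstar n)) - Δ n) := by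
  constructor
  · intro n h1 h2
    rcases eq_or_lt_of_le h1 with h | h
    · simp [← h, hΔ1]
    · have h2' : 2 ≤ n := h
      rw [hΔ n h2' h2]
      have := hstar (n - 1) (by omega) (by omega) (π n)
      linarith
  · have key : ∀ K, 1 ≤ K → K ≤ N →
        (∑ n ∈ Finset.Icc 1 K, l n (π n)) - ∑ m ∈ Finset.Icc 1 K, l m (πstar K)
          = ∑ n ∈ Finset.Icc 1 K,
              ((∑ m ∈ Finset.Icc 1 n, l m (π n))
                - (∑ m ∈ Finset.Icc 1 n, l m (πstar n)) - Δ n) := by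
      intro K hK1
      induction K, hK1 using Nat.le_induction with
      | base => intro _; simp [hΔ1]
      | succ K hK ih =>
        intro hKN
        have ih' := ih (by omega)
        have hs : ∀ f : ℕ → ℝ, ∑ n ∈ Finset.Icc 1 (K + 1), f n
            = (∑ n ∈ Finset.Icc 1 K, f n) + f (K + 1) := fun f =>
          Finset.sum_Icc_succ_top (by omega) f
        have hΔK : Δ (K + 1) = (∑ m ∈ Finset.Icc 1 K, l m (π (K + 1)))
            - ∑ m ∈ Finset.Icc 1 K, l m (πstar K) := by
          simpa using hΔ (K + 1) (by omega) hKN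
        rw [hs, hs, hs (fun n => (∑ m ∈ Finset.Icc 1 n, l m (π n))
            - (∑ m ∈ Finset.Icc 1 n, l m (πstar n)) - Δ n), ← ih']
        simp only [hΔK, hs (fun m => l m (π (K + 1))),
          hs (fun m => l m (πstar (K + 1)))]
        ring
    exact key N hN le_rfl
end

section
/- (Reduction of predictable online learning to FTL.) Let Π be a nonempty set, N ≥ 1, and let l_1, …, l_N : Π → ℝ be a predictable loss sequence with predictions l̂_1, …, l̂_N : Π → ℝ. Suppose the decisions are generated by Follow-the-Leader on the transformed sequence l̂_1, l_1 − l̂_1, l̂_2, l_2 − l̂_2, …; concretely, assume that for each n: π̂_n ∈ Π minimizes l_{1:n−1} over Π (π̂_1 ∈ Π arbitrary), and π_n ∈ Π minimizes π ↦ l_{1:n−1}(π) + l̂_n(π) over Π. For each n let π_n^⋆ ∈ Π minimize l_{1:n} over Π, and define Δ_1 := 0 and Δ_n := l_{1:n−1}(π_n) − l_{1:n−1}(π̂_n) for n ≥ 2. Then Σ_{n=1}^N l_n(π_n) − l_{1:N}(π_N^⋆) ≤ Σ_{n=1}^N ( l_{1:n}(π_n) − l_{1:n}(π_n^⋆) −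 Δ_n ), i.e., the bound of the Stronger FTL Lemma holds for the sequence {π_n}. -/
private lemma tele_aux (f : ℕ → ℝ) (N : ℕ) :
    ∑ n ∈ Finset.Icc 1 N, (f n - f (n - 1)) = f N - f 0 := by
  induction N with
  | zero => simp
  | succ k ih =>
      rw [Finset.sum_Icc_succ_top (Nat.succ_le_succ (Nat.zero_le k)), ih]
      simp

/-- Reduction of predictable online learning to FTL (Proposition 3):
if `π̂_n` minimizes `l_{1:n−1}` and `π_n` minimizes `l_{1:n−1} + l̂_n`
(i.e. the sequence is generated by FTL on the transformed adversarial
sequence `l̂_1, l_1−l̂_1, l̂_2, l_2−l̂_2, …`), then the Stronger-FTL bound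
holds with `Δ_1 = 0` and `Δ_n = l_{1:n−1}(π_n) − l_{1:n−1}(π̂_n)`. -/
theorem predictable_ftl_reduction {P : Type*} [Nonempty P] (N : ℕ) (hN : 1 ≤ N)
    (l lhat : ℕ → P → ℝ) (π πh πstar : ℕ → P)
    (hπh : ∀ n, 2 ≤ n → n ≤ N → ∀ q : P,
      ∑ m ∈ Finset.Icc 1 (n - 1), l m (πh n) ≤ ∑ m ∈ Finset.Icc 1 (n - 1), l m q)
    (hπ : ∀ n, 1 ≤ n → n ≤ N → ∀ q : P,
      (∑ m ∈ Finset.Icc 1 (n - 1), l m (π n)) + lhat n (π n)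
        ≤ (∑ m ∈ Finset.Icc 1 (n - 1), l m q) + lhat n q)
    (hstar : ∀ n, 1 ≤ n → n ≤ N → ∀ q : P,
      ∑ m ∈ Finset.Icc 1 n, l m (πstar n) ≤ ∑ m ∈ Finset.Icc 1 n, l m q)
    (Δ : ℕ → ℝ) (hΔ1 : Δ 1 = 0)
    (hΔ : ∀ n, 2 ≤ n → n ≤ N →
      Δ n = (∑ m ∈ Finset.Icc 1 (n - 1), l m (π n))
              - ∑ m ∈ Finset.Icc 1 (n - 1), l m (πh n)) :
    (∑ n ∈ Finset.Icc 1 N, l n (π n)) - ∑ m ∈ Finset.Icc 1 N, l m (πstar N)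
      ≤ ∑ n ∈ Finset.Icc 1 N,
          ((∑ m ∈ Finset.Icc 1 n, l m (π n))
            - (∑ m ∈ Finset.Icc 1 n, l m (πstar n)) - Δ n) := by
  set S : ℕ → P → ℝ := fun n q => ∑ m ∈ Finset.Icc 1 n, l m q with hS
  have hstep : ∀ n, 1 ≤ n → ∀ q : P, S n q = S (n - 1) q + l n q := by
    intro n hn q
    obtain ⟨k, rfl⟩ : ∃ k, n = k + 1 := ⟨n - 1, by omega⟩
    simp [hS, Finset.sum_Icc_succ_top (Nat.succ_le_succ (Nat.zero_le k))]
  -- rewrite the played-loss sum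
  have h1 : (∑ n ∈ Finset.Icc 1 N, l n (π n))
      = ∑ n ∈ Finset.Icc 1 N, (S n (π n) - S (n - 1) (π n)) := by
    refine Finset.sum_congr rfl fun n hn => ?_
    have hn1 : 1 ≤ n := (Finset.mem_Icc.mp hn).1
    rw [hstep n hn1]; ring
  -- telescope the comparator sum
  have h2 : (∑ m ∈ Finset.Icc 1 N, l m (πstar N))
      = ∑ n ∈ Finset.Icc 1 N, (S n (πstar n) - S (n - 1) (πstar (n - 1))) := by
    rw [tele_aux (fun n => S n (πstar n)) N]
    simp [hS]
  rw [h1, h2, ← Finset.sum_sub_distrib]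
  refine Finset.sum_le_sum fun n hn => ?_
  obtain ⟨hn1, hnN⟩ := Finset.mem_Icc.mp hn
  -- per-round inequality reduces to Δ n ≤ S (n-1) (π n) - S (n-1) (πstar (n-1))
  have key : Δ n ≤ S (n - 1) (π n) - S (n - 1) (πstar (n - 1)) := by
    rcases eq_or_lt_of_le hn1 with h | h
    · have : n = 1 := h.symm
      subst this
      simp [hΔ1, hS]
    · have hn2 : 2 ≤ n := h
      rw [hΔ n hn2 hnN]
      have hmin : S (n - 1) (πstar (n - 1)) ≤ S (n - 1) (πh n) :=
        hstar (n - 1) (by omega) (by omega) (πh n)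
      simp only [hS] at hmin ⊢
      linarith
  simp only [hS] at key ⊢
  linarith
end

section
/- (Linearly perturbed minimizers of a strongly convex function.) Let E be a real inner product space, K ⊆ E a convex set, α > 0, and F : E → ℝ α-strongly convex on K. Let v ∈ E. Suppose x⋆ ∈ K satisfies F(x⋆) ≤ F(z) for all z ∈ K, and x ∈ K minimizes z ↦ F(z) + ⟪v, z⟫ over K. Then F(x) − F(x⋆) ≤ ‖v‖²/(2α). -/
open scoped RealInnerProductSpace

/-- Linearly perturbed minimizers of a strongly convex function:
if `x⋆` minimizes `F` over `K` and `x` minimizes `z ↦ F z + ⟪v, z⟫` over `K`,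
then `F x − F x⋆ ≤ ‖v‖²/(2α)`. -/
theorem strongConvex_linear_perturbation_stability
    {E : Type*} [NormedAddCommGroup E] [InnerProductSpace ℝ E]
    (K : Set E) (hK : Convex ℝ K) (α : ℝ) (hα : 0 < α)
    (F : E → ℝ) (hF : StrongConvexOnSet K α F) (v : E)
    (xs : E) (hxs : xs ∈ K) (hmin : ∀ z ∈ K, F xs ≤ F z)
    (x : E) (hx : x ∈ K) (hxmin : ∀ z ∈ K, F x + ⟪v, x⟫ ≤ F z + ⟪v, z⟫) :
    F x - F xs ≤ ‖v‖ ^ 2 / (2 * α) := by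
  set r : ℝ := ‖xs - x‖ with hr
  set c : ℝ := ⟪v, xs⟫ - ⟪v, x⟫ with hc
  have hr0 : 0 ≤ r := norm_nonneg _
  have hcle : c ≤ ‖v‖ * r := by
    have := real_inner_le_norm v (xs - x)
    rwa [inner_sub_right] at this
  have key : ∀ t : ℝ, 0 < t → t ≤ 1 → F x - F xs ≤ c - α / 2 * (1 - t) * r ^ 2 := by
    intro t ht0 ht1
    have hz : t • xs + (1 - t) • x ∈ K := hK hxs hx ht0.le (by linarith) (by ring)
    have h1 := hxmin _ hz
    have h2 := hF hxs hx ht0.le ht1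
    have h3 : ⟪v, t • xs + (1 - t) • x⟫ = t * ⟪v, xs⟫ + (1 - t) * ⟪v, x⟫ := by
      rw [inner_add_right, real_inner_smul_right, real_inner_smul_right]
    rw [h3] at h1
    have h4 : t * (F x - F xs) ≤ t * c - α / 2 * t * (1 - t) * r ^ 2 := by nlinarith
    have := mul_le_mul_of_nonneg_left h4 (le_of_lt (inv_pos.mpr ht0))
    calc F x - F xs = t⁻¹ * (t * (F x - F xs)) := by field_simp
    _ ≤ t⁻¹ * (t * c - α / 2 * t * (1 - t) * r ^ 2) := this
    _ = c - α / 2 * (1 - t) * r ^ 2 := by field_simp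
  have main : F x - F xs ≤ c - α / 2 * r ^ 2 := by
    rcases eq_or_lt_of_le hr0 with h | h
    · have := key 1 one_pos le_rfl
      have hr2 : r ^ 2 = 0 := by rw [← h]; ring
      simp at this
      have hz2 : α / 2 * r ^ 2 = 0 := by rw [hr2]; ring
      linarith
    · apply le_of_forall_pos_le_add
      intro ε hε
      set t : ℝ := min 1 (ε / (α / 2 * r ^ 2)) with ht
      have hden : 0 < α / 2 * r ^ 2 := by positivity
      have ht0 : 0 < t := lt_min one_pos (div_pos hε hden)
      have ht1 : t ≤ 1 := min_le_left _ _
      have h5 := key t ht0 ht1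
      have h6 : α / 2 * t * r ^ 2 ≤ ε := by
        have : t ≤ ε / (α / 2 * r ^ 2) := min_le_right _ _
        calc α / 2 * t * r ^ 2 = t * (α / 2 * r ^ 2) := by ring
        _ ≤ ε / (α / 2 * r ^ 2) * (α / 2 * r ^ 2) := by
            exact mul_le_mul_of_nonneg_right this hden.le
        _ = ε := by field_simp
      nlinarith
  rw [div_eq_mul_inv]
  rw [← sub_nonneg]
  have h2a : (0:ℝ) < 2 * α := by linarith
  have key2 : ‖v‖ * r - α / 2 * r ^ 2 ≤ ‖v‖ ^ 2 * (2 * α)⁻¹ := by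
    rw [← sub_nonneg, ← mul_le_mul_iff_right₀ h2a] at *
    nlinarith [sq_nonneg (‖v‖ - α * r), mul_inv_cancel₀ (ne_of_gt h2a)]
  linarith
end

section
/- (Reduction of imitation learning to online learning; deterministic form of Lemma 2.) Let Π be a nonempty set, N ≥ 1, let l_1, …, l_N : Π → ℝ, let π_1, …, π_N ∈ Π, let w_1, …, w_N > 0, and let J_1, …, J_N, J⋆ ∈ ℝ and C ≥ 0 satisfy J_n − J⋆ ≤ C·l_n(π_n) for every n. Let π^⋆ ∈ Π satisfy Σ_{n=1}^N w_n·l_n(π^⋆) ≤ Σ_{n=1}^N w_n·l_n(π) for all π ∈ Π, and define Regret_N := Σ_{n=1}^N w_n·l_n(π_n) − Σ_{n=1}^N w_n·l_n(π^⋆) and ε_N := (1/w_{1:N})·Σ_{n=1}^N w_n·l_n(π^⋆). Then Σ_{n=1}^N (w_n/w_{1:N})·J_n ≤ J⋆ + C·( ε_N + Regret_N/w_{1:N} ). -/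
/-- Reduction of imitation learning to online learning (deterministic form of
Lemma 2): if `J_n − J⋆ ≤ C·l_n(π_n)` for every round, then the weighted
average performance is bounded by
`J⋆ + C(ε_N + Regret_N / w_{1:N})`. -/
theorem il_reduction_to_online_learning
    {P : Type*} [Nonempty P] (N : ℕ) (hN : 1 ≤ N)
    (l : ℕ → P → ℝ) (π : ℕ → P)
    (w : ℕ → ℝ) (hw : ∀ n, 1 ≤ n → n ≤ N → 0 < w n)
    (J : ℕ → ℝ) (Jstar C : ℝ) (hC : 0 ≤ C)
    (hJ : ∀ n, 1 ≤ n → n ≤ N → J n - Jstar ≤ C * l n (π n))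
    (πstar : P)
    (hstar : ∀ q : P,
      ∑ n ∈ Finset.Icc 1 N, w n * l n πstar ≤ ∑ n ∈ Finset.Icc 1 N, w n * l n q)
    (W Reg ε : ℝ)
    (hW : W = ∑ n ∈ Finset.Icc 1 N, w n)
    (hReg : Reg = (∑ n ∈ Finset.Icc 1 N, w n * l n (π n))
                    - ∑ n ∈ Finset.Icc 1 N, w n * l n πstar)
    (hε : ε = (1 / W) * ∑ n ∈ Finset.Icc 1 N, w n * l n πstar) :
    ∑ n ∈ Finset.Icc 1 N, (w n / W) * J n ≤ Jstar + C * (ε + Reg / W) := by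
  have hne : (Finset.Icc 1 N).Nonempty := ⟨1, by simp [hN]⟩
  have hWpos : 0 < W := by
    rw [hW]
    exact Finset.sum_pos (fun n hn => hw n (Finset.mem_Icc.mp hn).1 (Finset.mem_Icc.mp hn).2) hne
  have hWne : W ≠ 0 := ne_of_gt hWpos
  have hsum : ∑ n ∈ Finset.Icc 1 N, w n * J n
      ≤ W * Jstar + C * ∑ n ∈ Finset.Icc 1 N, w n * l n (π n) := by
    rw [hW, Finset.sum_mul, Finset.mul_sum, ← Finset.sum_add_distrib]
    apply Finset.sum_le_sum
    intro n hn
    obtain ⟨h1, h2⟩ := Finset.mem_Icc.mp hn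
    have := hJ n h1 h2
    have hwn := (hw n h1 h2).le
    nlinarith [mul_le_mul_of_nonneg_left this hwn]
  have hεW : ε * W = ∑ n ∈ Finset.Icc 1 N, w n * l n πstar := by
    rw [hε]; field_simp
  have key : ∑ n ∈ Finset.Icc 1 N, (w n / W) * J n
      = (1 / W) * ∑ n ∈ Finset.Icc 1 N, w n * J n := by
    rw [Finset.mul_sum]; apply Finset.sum_congr rfl; intro n _; ring
  rw [key]
  have hS : ∑ n ∈ Finset.Icc 1 N, w n * l n (π n) = Reg + ε * W := by
    rw [hReg, hεW]; ring
  rw [hS] at hsum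
  have : (1 / W) * ∑ n ∈ Finset.Icc 1 N, w n * J n
      ≤ (1 / W) * (W * Jstar + C * (Reg + ε * W)) :=
    mul_le_mul_of_nonneg_left hsum (by positivity)
  calc (1 / W) * ∑ n ∈ Finset.Icc 1 N, w n * J n
      ≤ (1 / W) * (W * Jstar + C * (Reg + ε * W)) := this
    _ = Jstar + C * (ε + Reg / W) := by field_simp; ring
end

section
/- (Weighted telescoping inequality underlying Lemma 3.) Let N ≥ 1 and let w_1, …, w_N be positive reals with w_1 = 1 satisfying the ratio condition w_{n+k}·w_m ≤ w_{m+k}·w_n for all indices with 1 ≤ m ≤ n and n + k ≤ N. Let a_0, a_1, …, a_N and b_1, …, b_N be reals with a_n = a_{n−1} + b_n for every n, and assume b_n ≥ 0 for every n with 2 ≤ n ≤ N. Then Σ_{n=1}^N w_n·a_n ≤ w_{1:N}·a_0 + Σ_{k=1}^N w_{N−k+1}·( Σ_{n=1}^k w_n·b_n ). -/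
/-- Weighted telescoping inequality underlying Lemma 3: with weights
satisfying `w_1 = 1` and the ratio condition
`w_{n+k}·w_m ≤ w_{m+k}·w_n` (`1 ≤ m ≤ n`, `n + k ≤ N`), and
`a_n = a_{n−1} + b_n` with `b_n ≥ 0` for `2 ≤ n ≤ N`, one has
`∑ w_n a_n ≤ w_{1:N} a_0 + ∑_k w_{N−k+1} (∑_{n≤k} w_n b_n)`. -/
theorem weighted_telescoping_inequality
    (N : ℕ) (hN : 1 ≤ N) (w : ℕ → ℝ)
    (hwpos : ∀ n, 1 ≤ n → n ≤ N → 0 < w n) (hw1 : w 1 = 1)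
    (hratio : ∀ m n k : ℕ, 1 ≤ m → m ≤ n → n + k ≤ N →
      w (n + k) * w m ≤ w (m + k) * w n)
    (a b : ℕ → ℝ)
    (hab : ∀ n, 1 ≤ n → n ≤ N → a n = a (n - 1) + b n)
    (hb : ∀ n, 2 ≤ n → n ≤ N → 0 ≤ b n) :
    ∑ n ∈ Finset.Icc 1 N, w n * a n
      ≤ (∑ m ∈ Finset.Icc 1 N, w m) * a 0
        + ∑ k ∈ Finset.Icc 1 N, w (N - k + 1) * (∑ n ∈ Finset.Icc 1 k, w n * b n) := by
  have haN : ∀ n, n ≤ N → a n = a 0 + ∑ j ∈ Finset.Icc 1 n, b j := by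
    intro n hn
    induction n with
    | zero => simp
    | succ m ih =>
      rw [Finset.sum_Icc_succ_top (by omega), hab (m + 1) (by omega) hn]
      simp only [Nat.add_sub_cancel]
      rw [ih (by omega)]
      ring
  have key : ∑ n ∈ Finset.Icc 1 N, ∑ j ∈ Finset.Icc 1 n, w n * b j
      ≤ ∑ k ∈ Finset.Icc 1 N, w (N - k + 1) * (∑ n ∈ Finset.Icc 1 k, w n * b n) := by
    have hL : ∑ n ∈ Finset.Icc 1 N, ∑ j ∈ Finset.Icc 1 n, w n * b j
        = ∑ j ∈ Finset.Icc 1 N, ∑ n ∈ Finset.Icc j N, w n * b j := by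
      apply Finset.sum_comm'
      intro n j
      simp only [Finset.mem_Icc]
      omega
    have hR : ∑ k ∈ Finset.Icc 1 N, w (N - k + 1) * (∑ n ∈ Finset.Icc 1 k, w n * b n)
        = ∑ j ∈ Finset.Icc 1 N, ∑ k ∈ Finset.Icc j N, w (N - k + 1) * (w j * b j) := by
      rw [← Finset.sum_comm' (s := Finset.Icc 1 N) (t := fun k => Finset.Icc 1 k)
        (t' := Finset.Icc 1 N) (s' := fun j => Finset.Icc j N)
        (f := fun k j => w (N - k + 1) * (w j * b j))
        (by intro k j; simp only [Finset.mem_Icc]; omega)]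
      exact Finset.sum_congr rfl fun k _ => by rw [Finset.mul_sum]
    rw [hL, hR]
    apply Finset.sum_le_sum
    intro j hj
    simp only [Finset.mem_Icc] at hj
    have hre : ∑ k ∈ Finset.Icc j N, w (N - k + 1) * (w j * b j)
        = ∑ n ∈ Finset.Icc j N, w (n - j + 1) * (w j * b j) := by
      apply Finset.sum_nbij' (fun k => N - k + j) (fun n => N - n + j)
      · intro k hk; simp only [Finset.mem_Icc] at hk ⊢; omega
      · intro n hn; simp only [Finset.mem_Icc] at hn ⊢; omega
      · intro k hk; simp only [Finset.mem_Icc] at hk; omega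
      · intro n hn; simp only [Finset.mem_Icc] at hn; omega
      · intro k hk; simp only [Finset.mem_Icc] at hk
        congr 2
        omega
    rw [hre]
    apply Finset.sum_le_sum
    intro n hn
    simp only [Finset.mem_Icc] at hn
    have hr : w n ≤ w (n - j + 1) * w j := by
      have := hratio 1 j (n - j) le_rfl hj.1 (by omega)
      rw [hw1, mul_one] at this
      have e1 : j + (n - j) = n := by omega
      have e2 : 1 + (n - j) = n - j + 1 := by omega
      rwa [e1, e2] at this
    rcases eq_or_lt_of_le hj.1 with h1 | h2
    · -- j = 1
      have : (1 : ℕ) = j := h1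
      subst this
      rw [hw1]
      have : n - 1 + 1 = n := by omega
      rw [this]
      ring_nf
      exact le_refl _
    · -- 2 ≤ j
      have hbj : 0 ≤ b j := hb j (by omega) hj.2
      calc w n * b j ≤ (w (n - j + 1) * w j) * b j :=
            mul_le_mul_of_nonneg_right hr hbj
        _ = w (n - j + 1) * (w j * b j) := by ring
  calc ∑ n ∈ Finset.Icc 1 N, w n * a n
      = ∑ n ∈ Finset.Icc 1 N, (w n * a 0 + ∑ j ∈ Finset.Icc 1 n, w n * b j) := by
        apply Finset.sum_congr rfl
        intro n hn
        simp only [Finset.mem_Icc] at hn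
        rw [haN n hn.2, mul_add, Finset.mul_sum]
    _ = (∑ m ∈ Finset.Icc 1 N, w m) * a 0
        + ∑ n ∈ Finset.Icc 1 N, ∑ j ∈ Finset.Icc 1 n, w n * b j := by
        rw [Finset.sum_add_distrib, Finset.sum_mul]
    _ ≤ _ := by exact add_le_add_right key _
end

section
/- (Reduction of RL to online learning; deterministic form of Lemma 3.) Let Π be a nonempty set, N ≥ 1, and let w_1, …, w_N be positive reals with w_1 = 1 satisfying w_{n+k}·w_m ≤ w_{m+k}·w_n for all indices with 1 ≤ m ≤ n and n + k ≤ N. Let l_1, …, l_N : Π → ℝ, let π_1, …, π_N ∈ Π with l_n(π_n) ≥ 0 for every 2 ≤ n ≤ N, and let J_0, J_1, …, J_N ∈ ℝ satisfy J_n = J_{n−1} + l_n(π_n) for every n. For each n let π_n^⋆ ∈ Π satisfy Σ_{m=1}^n w_m·l_m(π_n^⋆) ≤ Σ_{m=1}^n w_m·l_m(π) for all π ∈ Π, and define Regret_n := Σ_{m=1}^n w_m·l_m(π_m) − Σ_{m=1}^n w_m·l_m(π_n^⋆) and ε_n := (1/w_{1:n})·Σ_{m=1}^n w_m·l_m(π_n^⋆).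 Then Σ_{n=1}^N (w_n/w_{1:N})·J_n ≤ J_0 + Σ_{n=1}^N (w_{N−n+1}/w_{1:N})·( Regret_n + w_{1:n}·ε_n ). -/
open Finset

lemma tri_swap (N : ℕ) (f : ℕ → ℕ → ℝ) :
    ∑ n ∈ Icc 1 N, ∑ m ∈ Icc 1 n, f m n = ∑ m ∈ Icc 1 N, ∑ n ∈ Icc m N, f m n := by
  have h1 : ∑ n ∈ Icc 1 N, ∑ m ∈ Icc 1 n, f m n
      = ∑ n ∈ Icc 1 N, ∑ m ∈ Icc 1 N, if m ≤ n then f m n else 0 := by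
    refine sum_congr rfl fun n hn => ?_
    rw [← Finset.sum_subset (Icc_subset_Icc_right (mem_Icc.mp hn).2)
      (fun x hx hx' => by
        simp only [mem_Icc] at hx hx'
        rw [if_neg]; omega)]
    refine sum_congr rfl fun m hm => ?_
    rw [if_pos (mem_Icc.mp hm).2]
  have h2 : ∀ m ∈ Icc 1 N, (∑ n ∈ Icc 1 N, if m ≤ n then f m n else 0)
      = ∑ n ∈ Icc m N, f m n := by
    intro m hm
    rw [← Finset.sum_subset (Icc_subset_Icc_left (mem_Icc.mp hm).1)
      (fun x hx hx' => by
        simp only [mem_Icc] at hx hx'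
        rw [if_neg]; omega)]
    refine sum_congr rfl fun n hn => ?_
    rw [if_pos (mem_Icc.mp hn).1]
  rw [h1, Finset.sum_comm]
  exact sum_congr rfl h2

lemma reflect_sum (N m : ℕ) (hm : 1 ≤ m) (hmN : m ≤ N) (w : ℕ → ℝ) :
    ∑ n ∈ Icc m N, w (N - n + 1) = ∑ j ∈ Icc 1 (N - m + 1), w j := by
  refine Finset.sum_nbij' (fun n => N - n + 1) (fun j => N - j + 1) ?_ ?_ ?_ ?_ ?_
  · intro a ha; simp only [mem_Icc] at *; omega
  · intro a ha; simp only [mem_Icc] at *; omega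
  · intro a ha; simp only [mem_Icc] at *; omega
  · intro a ha; simp only [mem_Icc] at *; omega
  · intro a ha; rfl

lemma shift_sum (N m : ℕ) (hm : 1 ≤ m) (hmN : m ≤ N) (w : ℕ → ℝ) :
    ∑ n ∈ Icc m N, w n = ∑ j ∈ Icc 1 (N - m + 1), w (j + m - 1) := by
  refine Finset.sum_nbij' (fun n => n - m + 1) (fun j => j + m - 1) ?_ ?_ ?_ ?_ ?_
  · intro a ha; simp only [mem_Icc] at *; omega
  · intro a ha; simp only [mem_Icc] at *; omega
  · intro a ha; simp only [mem_Icc] at *; omega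
  · intro a ha; simp only [mem_Icc] at *; omega
  · intro a ha
    simp only [mem_Icc] at ha
    beta_reduce
    congr 1
    omega


/-- Reduction of RL to online learning (deterministic form of Lemma 3):
`J_n = J_{n−1} + l_n(π_n)` with `l_n(π_n) ≥ 0` for `n ≥ 2`, and the weighted
average performance is bounded by
`J_0 + ∑_n (w_{N−n+1}/w_{1:N})(Regret_n + w_{1:n}·ε_n)`. -/
theorem rl_reduction_to_online_learning
    {P : Type*} [Nonempty P] (N : ℕ) (hN : 1 ≤ N)
    (w : ℕ → ℝ) (hwpos : ∀ n, 1 ≤ n → n ≤ N → 0 < w n) (hw1 : w 1 = 1)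
    (hratio : ∀ m n k : ℕ, 1 ≤ m → m ≤ n → n + k ≤ N →
      w (n + k) * w m ≤ w (m + k) * w n)
    (l : ℕ → P → ℝ) (π : ℕ → P)
    (hl : ∀ n, 2 ≤ n → n ≤ N → 0 ≤ l n (π n))
    (J : ℕ → ℝ) (hJ : ∀ n, 1 ≤ n → n ≤ N → J n = J (n - 1) + l n (π n))
    (πstar : ℕ → P)
    (hstar : ∀ n, 1 ≤ n → n ≤ N → ∀ q : P,
      ∑ m ∈ Finset.Icc 1 n, w m * l m (πstar n) ≤ ∑ m ∈ Finset.Icc 1 n, w m * l m q)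
    (Reg ε : ℕ → ℝ)
    (hReg : ∀ n, 1 ≤ n → n ≤ N →
      Reg n = (∑ m ∈ Finset.Icc 1 n, w m * l m (π m))
                - ∑ m ∈ Finset.Icc 1 n, w m * l m (πstar n))
    (hε : ∀ n, 1 ≤ n → n ≤ N →
      ε n = (1 / ∑ m ∈ Finset.Icc 1 n, w m) * ∑ m ∈ Finset.Icc 1 n, w m * l m (πstar n)) :
    ∑ n ∈ Finset.Icc 1 N, (w n / ∑ m ∈ Finset.Icc 1 N, w m) * J n
      ≤ J 0 + ∑ n ∈ Finset.Icc 1 N,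
          (w (N - n + 1) / ∑ m ∈ Finset.Icc 1 N, w m)
            * (Reg n + (∑ m ∈ Finset.Icc 1 n, w m) * ε n) := by
  set W := ∑ m ∈ Icc 1 N, w m with hWdef
  have hW : 0 < W := by
    refine Finset.sum_pos (fun i hi => ?_) ⟨1, by simp [mem_Icc, hN]⟩
    exact hwpos i (mem_Icc.mp hi).1 (mem_Icc.mp hi).2
  -- partial-sum positivity
  have hWn : ∀ n, 1 ≤ n → n ≤ N → 0 < ∑ m ∈ Icc 1 n, w m := by
    intro n h1 h2
    refine Finset.sum_pos (fun i hi => ?_) ⟨1, by simp [mem_Icc, h1]⟩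
    simp only [mem_Icc] at hi
    exact hwpos i hi.1 (hi.2.trans h2)
  -- Reg + w_{1:n} ε = weighted loss sum
  have hRHSterm : ∀ n ∈ Icc 1 N,
      Reg n + (∑ m ∈ Icc 1 n, w m) * ε n = ∑ m ∈ Icc 1 n, w m * l m (π m) := by
    intro n hn
    have h1 := (mem_Icc.mp hn).1
    have h2 := (mem_Icc.mp hn).2
    rw [hReg n h1 h2, hε n h1 h2]
    have := (hWn n h1 h2).ne'
    field_simp
    ring
  -- J n = J 0 + partial sum of losses
  have hJn : ∀ n, n ≤ N → J n = J 0 + ∑ m ∈ Icc 1 n, l m (π m) := by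
    intro n
    induction n with
    | zero => simp
    | succ k ih =>
      intro hk
      rw [hJ (k + 1) (by omega) hk]
      simp only [Nat.add_sub_cancel]
      rw [ih (by omega), Finset.sum_Icc_succ_top (by omega)]
      ring
  -- Core inequality
  have key : ∑ n ∈ Icc 1 N, w n * (∑ m ∈ Icc 1 n, l m (π m))
      ≤ ∑ n ∈ Icc 1 N, w (N - n + 1) * (∑ m ∈ Icc 1 n, w m * l m (π m)) := by
    have hA : ∑ n ∈ Icc 1 N, w n * (∑ m ∈ Icc 1 n, l m (π m))
        = ∑ m ∈ Icc 1 N, (∑ n ∈ Icc m N, w n) * l m (π m) := by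
      calc ∑ n ∈ Icc 1 N, w n * (∑ m ∈ Icc 1 n, l m (π m))
          = ∑ n ∈ Icc 1 N, ∑ m ∈ Icc 1 n, w n * l m (π m) := by
            exact sum_congr rfl fun n _ => Finset.mul_sum _ _ _
        _ = ∑ m ∈ Icc 1 N, ∑ n ∈ Icc m N, w n * l m (π m) := tri_swap N _
        _ = ∑ m ∈ Icc 1 N, (∑ n ∈ Icc m N, w n) * l m (π m) := by
            exact sum_congr rfl fun m _ => (Finset.sum_mul _ _ _).symm
    have hB : ∑ n ∈ Icc 1 N, w (N - n + 1) * (∑ m ∈ Icc 1 n, w m * l m (π m))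
        = ∑ m ∈ Icc 1 N, (∑ n ∈ Icc m N, w (N - n + 1)) * (w m * l m (π m)) := by
      calc ∑ n ∈ Icc 1 N, w (N - n + 1) * (∑ m ∈ Icc 1 n, w m * l m (π m))
          = ∑ n ∈ Icc 1 N, ∑ m ∈ Icc 1 n, w (N - n + 1) * (w m * l m (π m)) := by
            exact sum_congr rfl fun n _ => Finset.mul_sum _ _ _
        _ = ∑ m ∈ Icc 1 N, ∑ n ∈ Icc m N, w (N - n + 1) * (w m * l m (π m)) := tri_swap N _
        _ = ∑ m ∈ Icc 1 N, (∑ n ∈ Icc m N, w (N - n + 1)) * (w m * l m (π m)) := by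
            exact sum_congr rfl fun m _ => (Finset.sum_mul _ _ _).symm
    rw [hA, hB]
    refine Finset.sum_le_sum fun m hm => ?_
    have h1 := (mem_Icc.mp hm).1
    have h2 := (mem_Icc.mp hm).2
    -- coefficient comparison
    have hcoef : ∑ n ∈ Icc m N, w n ≤ (∑ n ∈ Icc m N, w (N - n + 1)) * w m := by
      rw [reflect_sum N m h1 h2, shift_sum N m h1 h2, Finset.sum_mul]
      refine Finset.sum_le_sum fun j hj => ?_
      have hj1 := (mem_Icc.mp hj).1
      have hj2 := (mem_Icc.mp hj).2
      have := hratio 1 j (m - 1) le_rfl hj1 (by omega)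
      rw [hw1] at this
      calc w (j + m - 1) = w (j + (m - 1)) * 1 := by rw [mul_one]; congr 1; omega
        _ ≤ w (1 + (m - 1)) * w j := this
        _ = w j * w m := by rw [mul_comm]; congr 2; omega
    rcases eq_or_lt_of_le h1 with h1' | h1'
    · -- m = 1 : equality of coefficients
      subst h1'
      have hc1 : ∑ n ∈ Icc 1 N, w n = (∑ n ∈ Icc 1 N, w (N - n + 1)) * w 1 := by
        rw [hw1, mul_one, reflect_sum N 1 le_rfl hN, show N - 1 + 1 = N from by omega]
      rw [← mul_assoc, ← hc1]
    · -- m ≥ 2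
      have hlm : 0 ≤ l m (π m) := hl m h1' h2
      rw [← mul_assoc]
      exact mul_le_mul_of_nonneg_right hcoef hlm
  -- assemble
  have hRHS : ∑ n ∈ Icc 1 N, (w (N - n + 1) / W) * (Reg n + (∑ m ∈ Icc 1 n, w m) * ε n)
      = (1 / W) * ∑ n ∈ Icc 1 N, w (N - n + 1) * (∑ m ∈ Icc 1 n, w m * l m (π m)) := by
    rw [Finset.mul_sum]
    refine sum_congr rfl fun n hn => ?_
    rw [hRHSterm n hn]
    ring
  have hLHS : ∑ n ∈ Icc 1 N, (w n / W) * J n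
      = J 0 + (1 / W) * ∑ n ∈ Icc 1 N, w n * (∑ m ∈ Icc 1 n, l m (π m)) := by
    have : ∑ n ∈ Icc 1 N, (w n / W) * J n
        = ∑ n ∈ Icc 1 N, ((w n / W) * J 0 + (1 / W) * (w n * (∑ m ∈ Icc 1 n, l m (π m)))) := by
      refine sum_congr rfl fun n hn => ?_
      rw [hJn n (mem_Icc.mp hn).2]
      field_simp
    rw [this, Finset.sum_add_distrib, ← Finset.mul_sum]
    congr 1
    rw [← Finset.sum_mul, ← Finset.sum_div, ← hWdef, div_self hW.ne', one_mul]
  rw [hLHS, hRHS]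
  have := mul_le_mul_of_nonneg_left key (le_of_lt (one_div_pos.mpr hW))
  linarith
end

section
/- (PicCoLO with mirror descent generalizes optimistic mirror descent.) Let E be a real inner product space and R : E → ℝ differentiable with gradient ∇R. Let g, ĝ ∈ E and let π̂, π₊ ∈ E satisfy ∇R(π₊) = ∇R(π̂) − ĝ (the unconstrained Prediction-Step optimality condition for π₊ = argmin_{π∈E} ⟪ĝ, π⟫ + B_R(π‖π̂)). Then there exists a constant c ∈ ℝ such that for every π ∈ E: ⟪g − ĝ, π⟫ + B_R(π‖π₊) = ⟪g, π⟫ + B_R(π‖π̂) + c. Consequently, over any set Π ⊆ E the Correction-Step objective π ↦ ⟪g − ĝ, π⟫ + B_R(π‖π₊) and the optimistic-mirror-descent objective π ↦ ⟪g, π⟫ + B_R(π‖π̂) have the same minimizers. -/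
open scoped RealInnerProductSpace

/-- PicCoLO with mirror descent generalizes optimistic mirror descent:
if `∇R(π₊) = ∇R(π̂) − ĝ` (the unconstrained Prediction-Step optimality
condition), then the Correction-Step objective
`π ↦ ⟪g − ĝ, π⟫ + B_R(π‖π₊)` and the optimistic-mirror-descent objective
`π ↦ ⟪g, π⟫ + B_R(π‖π̂)` differ by a constant, and hence have the same
minimizers over any set `Π`. -/
theorem piccolo_generalizes_optimistic_mirror_descent
    {E : Type*} [NormedAddCommGroup E] [InnerProductSpace ℝ E]
    (R : E → ℝ) (gradR : E → E)
    (hR : ∀ p : E, HasFDerivAt R (innerSL ℝ (gradR p)) p)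
    (g ghat πh πp : E) (hstep : gradR πp = gradR πh - ghat) :
    ∃ c : ℝ,
      (∀ π : E, ⟪g - ghat, π⟫ + breg R gradR π πp = ⟪g, π⟫ + breg R gradR π πh + c) ∧
      ∀ (Pset : Set E) (y : E), y ∈ Pset →
        ((∀ z ∈ Pset, ⟪g - ghat, y⟫ + breg R gradR y πp ≤ ⟪g - ghat, z⟫ + breg R gradR z πp)
          ↔ (∀ z ∈ Pset, ⟪g, y⟫ + breg R gradR y πh ≤ ⟪g, z⟫ + breg R gradR z πh)) := by
  refine ⟨R πh - R πp + ⟪gradR πh, πp - πh⟫ - ⟪ghat, πp⟫, ?_, ?_⟩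
  · intro π
    simp only [breg, hstep, inner_sub_left, inner_sub_right]
    ring
  · intro Pset y hy
    constructor
    · intro h z hz
      have := h z hz
      simp only [breg, hstep, inner_sub_left, inner_sub_right] at this ⊢
      linarith
    · intro h z hz
      have := h z hz
      simp only [breg, hstep, inner_sub_left, inner_sub_right] at this ⊢
      linarith
end

section
/- (Expected gradient-prediction-error bound; analogue of Lemma 4.3 of Cheng et al.) Let (Ω, μ) be a probability space, E a real Banach space, and F a real normed space (the policy parameter space). Let g : Ω → E and ĝ : Ω → E be strongly measurable with ∫‖g‖² dμ < ∞ and ∫‖ĝ‖² dμ < ∞, and let Φ : F → Ω → E be such that Φ(π') is Bochner integrable for every π' ∈ F. Let π, π̂ ∈ F and L, σ_g, σ_ĝ ≥ 0, and assume: (i) ∫‖g − ∫g dμ‖² dμ ≤ σ_g²; (ii) ∫‖ĝ − ∫ĝ dμ‖² dμ ≤ σ_ĝ²; (iii) ∫ĝ dμ = ∫Φ(π̂) dμ; and (iv) ‖∫Φ(π') dμ − ∫Φ(π'') dμ‖ ≤ L·‖π' − π''‖ for all π', π'' ∈ F. Then ∫‖g − ĝ‖² dμ ≤ 4·( σ_g²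 + σ_ĝ² + L²·‖π − π̂‖² + ‖∫g dμ − ∫Φ(π) dμ‖² ). -/
open MeasureTheory

lemma four_sq_bound {E : Type*} [NormedAddCommGroup E] (a b c d : E) :
    ‖a + b + c + d‖ ^ 2 ≤ 4 * (‖a‖ ^ 2 + ‖b‖ ^ 2 + ‖c‖ ^ 2 + ‖d‖ ^ 2) := by
  have h1 : ‖a + b + c + d‖ ≤ ‖a‖ + ‖b‖ + ‖c‖ + ‖d‖ := by
    calc ‖a + b + c + d‖ ≤ ‖a + b + c‖ + ‖d‖ := norm_add_le _ _
      _ ≤ ‖a + b‖ + ‖c‖ + ‖d‖ := by gcongr; exact norm_add_le _ _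
      _ ≤ ‖a‖ + ‖b‖ + ‖c‖ + ‖d‖ := by gcongr; exact norm_add_le _ _
  have h2 : ‖a + b + c + d‖ ^ 2 ≤ (‖a‖ + ‖b‖ + ‖c‖ + ‖d‖) ^ 2 :=
    pow_le_pow_left₀ (norm_nonneg _) h1 2
  nlinarith [sq_nonneg (‖a‖ - ‖b‖), sq_nonneg (‖a‖ - ‖c‖), sq_nonneg (‖a‖ - ‖d‖),
    sq_nonneg (‖b‖ - ‖c‖), sq_nonneg (‖b‖ - ‖d‖), sq_nonneg (‖c‖ - ‖d‖)]

lemma sub_const_sq_integrable {Ω : Type*} [MeasurableSpace Ω] (μ : Measure Ω)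
    [IsProbabilityMeasure μ]
    {E : Type*} [NormedAddCommGroup E] {f : Ω → E}
    (hfm : StronglyMeasurable f) (hf2 : Integrable (fun ω => ‖f ω‖ ^ 2) μ)
    (c : E) : Integrable (fun ω => ‖f ω - c‖ ^ 2) μ := by
  refine Integrable.mono' ((hf2.const_mul 2).add (integrable_const (2 * ‖c‖ ^ 2))) ?_ ?_
  · exact ((continuous_norm.pow 2).comp_stronglyMeasurable
      (hfm.sub stronglyMeasurable_const)).aestronglyMeasurable
  · filter_upwards with ω
    simp only [Pi.add_apply]
    rw [Real.norm_eq_abs, abs_of_nonneg (by positivity)]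
    have h := norm_sub_le (f ω) c
    nlinarith [norm_nonneg (f ω - c), norm_nonneg (f ω), norm_nonneg c,
      sq_nonneg (‖f ω‖ - ‖c‖), pow_le_pow_left₀ (norm_nonneg (f ω - c)) h 2]

/-- Expected gradient-prediction-error bound (analogue of Lemma 4.3 of
Cheng et al.): `∫‖g − ĝ‖² ≤ 4(σ_g² + σ_ĝ² + L²‖π − π̂‖² + E(Φ))`, where
`E(Φ) = ‖∫g − ∫Φ(π)‖²` is the model bias at the policy `π`. -/
theorem expected_gradient_error_bound
    {Ω : Type*} [MeasurableSpace Ω] (μ : Measure Ω) [IsProbabilityMeasure μ]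
    {E : Type*} [NormedAddCommGroup E] [NormedSpace ℝ E] [CompleteSpace E]
    {F : Type*} [NormedAddCommGroup F] [NormedSpace ℝ F]
    (g ghat : Ω → E)
    (hgm : StronglyMeasurable g) (hghatm : StronglyMeasurable ghat)
    (hg2 : Integrable (fun ω => ‖g ω‖ ^ 2) μ)
    (hghat2 : Integrable (fun ω => ‖ghat ω‖ ^ 2) μ)
    (Φ : F → Ω → E) (hΦ : ∀ π' : F, Integrable (Φ π') μ)
    (π πh : F) (L σg σghat : ℝ)
    (hL : 0 ≤ L) (hσg : 0 ≤ σg) (hσghat : 0 ≤ σghat)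
    (hvarg : ∫ ω, ‖g ω - ∫ ω', g ω' ∂μ‖ ^ 2 ∂μ ≤ σg ^ 2)
    (hvarghat : ∫ ω, ‖ghat ω - ∫ ω', ghat ω' ∂μ‖ ^ 2 ∂μ ≤ σghat ^ 2)
    (hmean : (∫ ω, ghat ω ∂μ) = ∫ ω, Φ πh ω ∂μ)
    (hLip : ∀ π' π'' : F,
      ‖(∫ ω, Φ π' ω ∂μ) - ∫ ω, Φ π'' ω ∂μ‖ ≤ L * ‖π' - π''‖) :
    ∫ ω, ‖g ω - ghat ω‖ ^ 2 ∂μ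
      ≤ 4 * (σg ^ 2 + σghat ^ 2 + L ^ 2 * ‖π - πh‖ ^ 2
              + ‖(∫ ω, g ω ∂μ) - ∫ ω, Φ π ω ∂μ‖ ^ 2) := by
  set gb := ∫ ω, g ω ∂μ with hgb
  set gh := ∫ ω, ghat ω ∂μ with hgh
  set A := ∫ ω, Φ π ω ∂μ with hA
  have hint1 : Integrable (fun ω => ‖g ω - gb‖ ^ 2) μ :=
    sub_const_sq_integrable μ hgm hg2 gb
  have hint2 : Integrable (fun ω => ‖ghat ω - gh‖ ^ 2) μ :=
    sub_const_sq_integrable μ hghatm hghat2 gh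
  have hint2' : Integrable (fun ω => ‖gh - ghat ω‖ ^ 2) μ := by
    simpa [norm_sub_rev] using hint2
  have hintL : Integrable (fun ω => ‖g ω - ghat ω‖ ^ 2) μ := by
    refine Integrable.mono' ((hg2.const_mul 2).add (hghat2.const_mul 2)) ?_ ?_
    · exact ((continuous_norm.pow 2).comp_stronglyMeasurable
        (hgm.sub hghatm)).aestronglyMeasurable
    · filter_upwards with ω
      simp only [Pi.add_apply]
      rw [Real.norm_eq_abs, abs_of_nonneg (by positivity)]
      have h := norm_sub_le (g ω) (ghat ω)
      nlinarith [norm_nonneg (g ω - ghat ω), norm_nonneg (g ω), norm_nonneg (ghat ω),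
        sq_nonneg (‖g ω‖ - ‖ghat ω‖),
        pow_le_pow_left₀ (norm_nonneg (g ω - ghat ω)) h 2]
  have hptw : ∀ ω, ‖g ω - ghat ω‖ ^ 2 ≤
      4 * (‖g ω - gb‖ ^ 2 + ‖gb - A‖ ^ 2 + ‖A - gh‖ ^ 2 + ‖gh - ghat ω‖ ^ 2) := by
    intro ω
    have hdecomp : g ω - ghat ω = (g ω - gb) + (gb - A) + (A - gh) + (gh - ghat ω) := by
      abel
    rw [hdecomp]
    exact four_sq_bound _ _ _ _
  have hRHSint : Integrable (fun ω =>
      4 * (‖g ω - gb‖ ^ 2 + ‖gb - A‖ ^ 2 + ‖A - gh‖ ^ 2 + ‖gh - ghat ω‖ ^ 2)) μ :=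
    (((hint1.add (integrable_const _)).add (integrable_const _)).add hint2').const_mul 4
  have hstep : ∫ ω, ‖g ω - ghat ω‖ ^ 2 ∂μ ≤
      ∫ ω, 4 * (‖g ω - gb‖ ^ 2 + ‖gb - A‖ ^ 2 + ‖A - gh‖ ^ 2 + ‖gh - ghat ω‖ ^ 2) ∂μ :=
    integral_mono hintL hRHSint hptw
  have hcalc : ∫ ω, 4 * (‖g ω - gb‖ ^ 2 + ‖gb - A‖ ^ 2 + ‖A - gh‖ ^ 2 + ‖gh - ghat ω‖ ^ 2) ∂μ
      = 4 * ((∫ ω, ‖g ω - gb‖ ^ 2 ∂μ) + ‖gb - A‖ ^ 2 + ‖A - gh‖ ^ 2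
          + ∫ ω, ‖gh - ghat ω‖ ^ 2 ∂μ) := by
    have i1 : Integrable (fun ω => ‖g ω - gb‖ ^ 2 + ‖gb - A‖ ^ 2) μ :=
      hint1.add (integrable_const _)
    have i2 : Integrable (fun ω => ‖g ω - gb‖ ^ 2 + ‖gb - A‖ ^ 2 + ‖A - gh‖ ^ 2) μ :=
      i1.add (integrable_const _)
    rw [integral_const_mul]
    congr 1
    rw [integral_add i2 hint2', integral_add i1 (integrable_const _),
      integral_add hint1 (integrable_const _), integral_const, integral_const]
    simp
  have hmid : ‖A - gh‖ ^ 2 ≤ L ^ 2 * ‖π - πh‖ ^ 2 := by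
    have h1 : ‖A - gh‖ ≤ L * ‖π - πh‖ := by
      rw [hA, hmean]
      exact hLip π πh
    calc ‖A - gh‖ ^ 2 ≤ (L * ‖π - πh‖) ^ 2 := by
          apply pow_le_pow_left₀ (norm_nonneg _) h1
      _ = L ^ 2 * ‖π - πh‖ ^ 2 := by ring
  have hv2 : ∫ ω, ‖gh - ghat ω‖ ^ 2 ∂μ ≤ σghat ^ 2 := by
    simpa [norm_sub_rev] using hvarghat
  calc ∫ ω, ‖g ω - ghat ω‖ ^ 2 ∂μ
      ≤ 4 * ((∫ ω, ‖g ω - gb‖ ^ 2 ∂μ) + ‖gb - A‖ ^ 2 + ‖A - gh‖ ^ 2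
          + ∫ ω, ‖gh - ghat ω‖ ^ 2 ∂μ) := hcalc ▸ hstep
    _ ≤ 4 * (σg ^ 2 + ‖gb - A‖ ^ 2 + L ^ 2 * ‖π - πh‖ ^ 2 + σghat ^ 2) := by
        gcongr
    _ = 4 * (σg ^ 2 + σghat ^ 2 + L ^ 2 * ‖π - πh‖ ^ 2 + ‖gb - A‖ ^ 2) := by ring
end

section
/- For every real p ≥ 0 there exists a constant C > 0 (depending only on p) such that for every natural number N ≥ 1: Σ_{n=1}^N n^{2p}·√n / ( Σ_{m=1}^n m^p ) ≤ C·N^{p + 1/2}. -/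
open Finset

/-- `√(i+1) - √i ≥ 1/(2√(i+1))`. -/
lemma piccolo_sqrt_gap (i : ℕ) :
    1 / (2 * Real.sqrt (i + 1)) ≤ Real.sqrt (i + 1) - Real.sqrt i := by
  have h0 : (0:ℝ) ≤ (i:ℝ) := by positivity
  have h1 : (0:ℝ) < (i:ℝ) + 1 := by positivity
  have hs1 : 0 < Real.sqrt ((i:ℝ) + 1) := Real.sqrt_pos.mpr h1
  have hs0 : 0 ≤ Real.sqrt (i:ℝ) := Real.sqrt_nonneg _
  have hsq1 : Real.sqrt ((i:ℝ) + 1) ^ 2 = (i:ℝ) + 1 := Real.sq_sqrt (le_of_lt h1)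
  have hsq0 : Real.sqrt (i:ℝ) ^ 2 = (i:ℝ) := Real.sq_sqrt h0
  have hle : Real.sqrt (i:ℝ) ≤ Real.sqrt ((i:ℝ) + 1) :=
    Real.sqrt_le_sqrt (by linarith)
  have hmul : (Real.sqrt ((i:ℝ) + 1) - Real.sqrt i) * (Real.sqrt ((i:ℝ) + 1) + Real.sqrt i) = 1 := by
    nlinarith [hsq1, hsq0]
  have hden : 0 < Real.sqrt ((i:ℝ) + 1) + Real.sqrt i := by linarith
  rw [div_le_iff₀ (by positivity)]
  nlinarith [hmul, hle, hs1, hs0]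

/-- Lower bound for the weight sum: `∑_{m=1}^n m^p ≥ n^{p+1}/2^{p+1}`. -/
lemma piccolo_sum_lb (p : ℝ) (hp : 0 ≤ p) (n : ℕ) (hn : 1 ≤ n) :
    (n:ℝ) ^ (p + 1) / 2 ^ (p + 1) ≤ ∑ m ∈ Icc 1 n, (m : ℝ) ^ p := by
  set k := (n + 1) / 2 with hk
  have hk1 : 1 ≤ k := by omega
  have hkn : k ≤ n := by omega
  have hsub : Icc k n ⊆ Icc 1 n := Icc_subset_Icc hk1 le_rfl
  have hnonneg : ∀ m ∈ Icc 1 n, (0:ℝ) ≤ (m:ℝ) ^ p := fun m _ => by positivity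
  have step1 : ∑ m ∈ Icc k n, (m : ℝ) ^ p ≤ ∑ m ∈ Icc 1 n, (m : ℝ) ^ p :=
    Finset.sum_le_sum_of_subset_of_nonneg hsub (fun m hm _ => hnonneg m hm)
  have hterm : ∀ m ∈ Icc k n, ((n:ℝ)/2) ^ p ≤ (m:ℝ) ^ p := by
    intro m hm
    have hm' := Finset.mem_Icc.mp hm
    have h2m : n ≤ 2 * m := by omega
    have : (n:ℝ)/2 ≤ (m:ℝ) := by
      have : (n:ℝ) ≤ 2 * m := by exact_mod_cast h2m
      linarith
    exact Real.rpow_le_rpow (by positivity) this hp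
  have step2 : (Icc k n).card • ((n:ℝ)/2) ^ p ≤ ∑ m ∈ Icc k n, (m : ℝ) ^ p :=
    Finset.card_nsmul_le_sum _ _ _ hterm
  have hcard : (n:ℝ)/2 ≤ ((Icc k n).card : ℝ) := by
    rw [Nat.card_Icc]
    have : n ≤ 2 * (n + 1 - k) := by omega
    have h2 : (n:ℝ) ≤ 2 * ((n + 1 - k : ℕ) : ℝ) := by exact_mod_cast this
    linarith
  have hnpos : (0:ℝ) < (n:ℝ) := by exact_mod_cast hn
  have hhalf : (0:ℝ) < (n:ℝ)/2 := by linarith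
  have step3 : ((n:ℝ)/2) * ((n:ℝ)/2) ^ p ≤ ((Icc k n).card : ℝ) * ((n:ℝ)/2) ^ p := by
    apply mul_le_mul_of_nonneg_right hcard (by positivity)
  have heq : ((n:ℝ)/2) * ((n:ℝ)/2) ^ p = (n:ℝ) ^ (p + 1) / 2 ^ (p + 1) := by
    rw [← Real.rpow_one_add' (le_of_lt hhalf) (by linarith),
      Real.div_rpow (le_of_lt hnpos) (by norm_num)]
    ring_nf
  rw [nsmul_eq_mul] at step2
  linarith [heq ▸ step3]

/-- Key summation estimate of the PicCoLO regret analysis: for monomial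
weights `w_n = n^p` and adaptive regularization strength
`α_n = w_{1:n}/√n`, the error sum `∑_{n=1}^N n^{2p}√n / w_{1:n}` is
`O(N^{p+1/2})`. -/
theorem piccolo_error_sum_estimate (p : ℝ) (hp : 0 ≤ p) :
    ∃ C : ℝ, 0 < C ∧ ∀ N : ℕ, 1 ≤ N →
      ∑ n ∈ Finset.Icc 1 N,
          ((n : ℝ) ^ (2 * p) * Real.sqrt n) / (∑ m ∈ Finset.Icc 1 n, (m : ℝ) ^ p)
        ≤ C * (N : ℝ) ^ (p + 1 / 2) := by
  refine ⟨2 ^ (p + 2), by positivity, ?_⟩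
  intro N hN
  have hNpos : (0:ℝ) < (N:ℝ) := by exact_mod_cast hN
  -- step 1: termwise bound by 2^(p+1) * n^(p-1/2)
  have key : ∀ n ∈ Icc 1 N,
      ((n : ℝ) ^ (2 * p) * Real.sqrt n) / (∑ m ∈ Icc 1 n, (m : ℝ) ^ p)
        ≤ 2 ^ (p + 1) * (n:ℝ) ^ (p - 1/2) := by
    intro n hn
    have hn1 : 1 ≤ n := (Finset.mem_Icc.mp hn).1
    have hnpos : (0:ℝ) < (n:ℝ) := by exact_mod_cast hn1
    have hL : (0:ℝ) < (n:ℝ) ^ (p + 1) / 2 ^ (p + 1) := by positivity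
    have h1 : ((n : ℝ) ^ (2 * p) * Real.sqrt n) / (∑ m ∈ Icc 1 n, (m : ℝ) ^ p)
        ≤ ((n : ℝ) ^ (2 * p) * Real.sqrt n) / ((n:ℝ) ^ (p + 1) / 2 ^ (p + 1)) :=
      div_le_div_of_nonneg_left (by positivity) hL (piccolo_sum_lb p hp n hn1)
    have h2 : ((n : ℝ) ^ (2 * p) * Real.sqrt n) / ((n:ℝ) ^ (p + 1) / 2 ^ (p + 1))
        = 2 ^ (p + 1) * (n:ℝ) ^ (p - 1/2) := by
      rw [Real.sqrt_eq_rpow, ← Real.rpow_add hnpos, div_div_eq_mul_div,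
        mul_comm, mul_div_assoc, ← Real.rpow_sub hnpos,
        show 2 * p + 1/2 - (p + 1) = p - 1/2 by ring]
    linarith [h2 ▸ h1]
  have step1 := Finset.sum_le_sum key
  -- step 2: reindex to range N and telescope
  have hre : ∑ n ∈ Icc 1 N, 2 ^ (p + 1) * (n:ℝ) ^ (p - 1/2)
      = ∑ i ∈ range N, 2 ^ (p + 1) * ((i+1:ℕ):ℝ) ^ (p - 1/2) := by
    rw [← Finset.Ico_add_one_right_eq_Icc, Finset.sum_Ico_eq_sum_range]
    simp [add_comm]
  have key2 : ∀ i ∈ range N,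
      2 ^ (p + 1) * ((i+1:ℕ):ℝ) ^ (p - 1/2)
        ≤ 2 ^ (p + 2) * (N:ℝ) ^ p * (Real.sqrt ((i:ℕ)+1) - Real.sqrt (i:ℕ)) := by
    intro i hi
    have hiN : i + 1 ≤ N := Finset.mem_range.mp hi
    have hipos : (0:ℝ) < ((i:ℝ) + 1) := by positivity
    have hcast : (((i+1:ℕ)):ℝ) = (i:ℝ) + 1 := by push_cast; ring
    have hgap := piccolo_sqrt_gap i
    have hsplit : ((i:ℝ)+1) ^ (p - 1/2) = ((i:ℝ)+1) ^ p * (1 / Real.sqrt ((i:ℝ)+1)) := by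
      rw [Real.sqrt_eq_rpow, show p - 1/2 = p + -(1/2) by ring,
        Real.rpow_add hipos, Real.rpow_neg (le_of_lt hipos), one_div]
      ring
    have hbase : ((i:ℝ)+1) ^ p ≤ (N:ℝ) ^ p := by
      apply Real.rpow_le_rpow (le_of_lt hipos) _ hp
      exact_mod_cast hiN
    have hrec : 1 / Real.sqrt ((i:ℝ)+1) ≤ 2 * (Real.sqrt ((i:ℝ)+1) - Real.sqrt (i:ℝ)) := by
      have := piccolo_sqrt_gap i
      have hs1 : 0 < Real.sqrt ((i:ℝ) + 1) := Real.sqrt_pos.mpr hipos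
      rw [div_le_iff₀ (by positivity)] at this ⊢
      · nlinarith [this]
    have hgappos : 0 ≤ Real.sqrt ((i:ℝ)+1) - Real.sqrt (i:ℝ) := by
      have := Real.sqrt_le_sqrt (show (i:ℝ) ≤ (i:ℝ)+1 by linarith)
      linarith
    have h2p : (0:ℝ) < 2 ^ (p+1) := by positivity
    have hfin : ((i:ℝ)+1) ^ (p - 1/2) ≤ (N:ℝ) ^ p * (2 * (Real.sqrt ((i:ℝ)+1) - Real.sqrt (i:ℝ))) := by
      rw [hsplit]
      apply mul_le_mul hbase hrec (by positivity) (by positivity)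
    rw [hcast]
    have h22 : (2:ℝ) ^ (p + 2) = 2 ^ (p + 1) * 2 := by
      rw [show p + 2 = (p + 1) + 1 by ring, Real.rpow_add (by norm_num), Real.rpow_one]
    rw [h22]
    calc 2 ^ (p + 1) * ((i:ℝ)+1) ^ (p - 1/2)
        ≤ 2 ^ (p + 1) * ((N:ℝ) ^ p * (2 * (Real.sqrt ((i:ℝ)+1) - Real.sqrt (i:ℝ)))) :=
          mul_le_mul_of_nonneg_left hfin (le_of_lt h2p)
      _ = 2 ^ (p + 1) * 2 * (N:ℝ) ^ p * (Real.sqrt ((i:ℝ)+1) - Real.sqrt (i:ℝ)) := by ring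
      _ = 2 ^ (p + 1) * 2 * (N:ℝ) ^ p * (Real.sqrt (((i:ℕ):ℝ)+1) - Real.sqrt ((i:ℕ):ℝ)) := by norm_num
  have step2 := Finset.sum_le_sum key2
  have htel : ∑ i ∈ range N, (Real.sqrt ((i:ℕ)+1) - Real.sqrt (i:ℕ)) = Real.sqrt N := by
    have := Finset.sum_range_sub (fun i : ℕ => Real.sqrt i) N
    simp only [Nat.cast_add, Nat.cast_one] at this
    rw [this]
    simp
  have hfinal : ∑ i ∈ range N, 2 ^ (p + 2) * (N:ℝ) ^ p * (Real.sqrt ((i:ℕ)+1) - Real.sqrt (i:ℕ))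
      = 2 ^ (p + 2) * (N:ℝ) ^ (p + 1/2) := by
    rw [← Finset.mul_sum, htel, Real.sqrt_eq_rpow, mul_assoc, ← Real.rpow_add hNpos]
  calc ∑ n ∈ Finset.Icc 1 N,
          ((n : ℝ) ^ (2 * p) * Real.sqrt n) / (∑ m ∈ Finset.Icc 1 n, (m : ℝ) ^ p)
      ≤ ∑ n ∈ Icc 1 N, 2 ^ (p + 1) * (n:ℝ) ^ (p - 1/2) := step1
    _ = ∑ i ∈ range N, 2 ^ (p + 1) * ((i+1:ℕ):ℝ) ^ (p - 1/2) := hre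
    _ ≤ ∑ i ∈ range N, 2 ^ (p + 2) * (N:ℝ) ^ p * (Real.sqrt ((i:ℕ)+1) - Real.sqrt (i:ℕ)) := step2
    _ = 2 ^ (p + 2) * (N:ℝ) ^ (p + 1/2) := hfinal
end

section
/- (Concrete O(1/√N) average-regret rate of PicCoLO, deterministic instance of Theorem 2.) For every real p ≥ 0 there exists a constant C > 0 depending only on p such that the following holds. Let E be a real inner product space, Π ⊆ E a nonempty convex set, N ≥ 1, and set w_n := n^p and w_{1:n} := Σ_{m=1}^n m^p. Let g_1, …, g_N, ĝ_1, …, ĝ_N ∈ E with e_n := g_n − ĝ_n and ‖e_n‖ ≤ G for all n, let D ≥ 0 and M_N ≤ D·w_{1:N}/√N, let R_0, R_1, …, R_N : E → ℝ be differentiable with R_0 convex and, for n ≥ 1, R_n α_n-strongly convex on E with α_n := w_{1:n}/√n. Suppose π̂_1, …, π̂_{N+1} ∈ Π and π_1, …, π_N ∈ Π satisfy for every n and every π ∈ Π: (i) ⟪w_n·ĝ_n + ∇R_{n−1}(π_n) − ∇R_{n−1}(π̂_n), π_n − π⟫ ≤ 0; (ii) ⟪w_n·e_n + ∇R_n(π̂_{n+1})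 − ∇R_n(π_n), π̂_{n+1} − π⟫ ≤ 0; and (iii) B_{R_0}(π‖π̂_1) + Σ_{n=1}^N (B_{R_n}(π‖π_n) − B_{R_{n−1}}(π‖π_n)) ≤ M_N. Then for every π ∈ Π: (1/w_{1:N})·Σ_{n=1}^N w_n·⟪g_n, π_n − π⟫ ≤ (D + C·G²)/√N. -/
open scoped RealInnerProductSpace

lemma breg_three_point {E : Type*} [NormedAddCommGroup E] [InnerProductSpace ℝ E]
    (R : E → ℝ) (gR : E → E) (q a b : E) :
    ⟪gR b - gR a, a - q⟫ = breg R gR q b - breg R gR q a - breg R gR a b := by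
  simp only [breg, inner_sub_left, inner_sub_right]
  ring

lemma telescope_sum (f : ℕ → ℝ) (N : ℕ) :
    ∑ n ∈ Finset.Icc 1 N, (f (n - 1) - f n) = f 0 - f N := by
  induction N with
  | zero => simp
  | succ N ih =>
    rw [Finset.sum_Icc_succ_top (by omega), ih]
    simp

lemma sum_inv_sqrt_le (N : ℕ) :
    ∑ n ∈ Finset.Icc 1 N, (1 / Real.sqrt n) ≤ 2 * Real.sqrt N := by
  induction N with
  | zero => simp
  | succ N ih =>
    rw [Finset.sum_Icc_succ_top (by omega)]
    have hb : (0:ℝ) < Real.sqrt (N + 1) := Real.sqrt_pos.2 (by positivity)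
    have ha : (0:ℝ) ≤ Real.sqrt N := Real.sqrt_nonneg _
    have ha2 : Real.sqrt N ^ 2 = (N:ℝ) := Real.sq_sqrt (by positivity)
    have hb2 : Real.sqrt (N + 1) ^ 2 = (N:ℝ) + 1 := Real.sq_sqrt (by positivity)
    have key : 1 / Real.sqrt (N+1) ≤ 2 * Real.sqrt (N+1) - 2 * Real.sqrt N := by
      rw [div_le_iff₀ hb]
      nlinarith [sq_nonneg (Real.sqrt N - Real.sqrt (N+1))]
    push_cast
    push_cast at ih
    linarith

lemma sum_pow_ge (p : ℝ) (hp : 0 ≤ p) (n : ℕ) (hn : 1 ≤ n) :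
    (n:ℝ) ^ (p+1) / 2 ^ (p+1) ≤ ∑ m ∈ Finset.Icc 1 n, (m:ℝ) ^ p := by
  have h1 : ∑ m ∈ Finset.Icc ((n+1)/2) n, (m:ℝ) ^ p ≤ ∑ m ∈ Finset.Icc 1 n, (m:ℝ) ^ p := by
    apply Finset.sum_le_sum_of_subset_of_nonneg
    · apply Finset.Icc_subset_Icc_left; omega
    · intro m _ _; positivity
  have h2 : ((n:ℝ)/2) ^ p * ((n:ℝ)/2) ≤ ∑ m ∈ Finset.Icc ((n+1)/2) n, (m:ℝ) ^ p := by
    have hcard : (Finset.Icc ((n+1)/2) n).card = n + 1 - (n+1)/2 := Nat.card_Icc _ _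
    have hlow : ∀ m ∈ Finset.Icc ((n+1)/2) n, ((n:ℝ)/2) ^ p ≤ (m:ℝ) ^ p := by
      intro m hm
      simp only [Finset.mem_Icc] at hm
      apply Real.rpow_le_rpow (by positivity) _ hp
      have : (n:ℝ) ≤ 2 * ((n+1)/2 : ℕ) := by
        have : n ≤ 2 * ((n+1)/2) := by omega
        exact_mod_cast this
      have hm' : ((n+1)/2 : ℕ) ≤ (m:ℝ) := by exact_mod_cast hm.1
      linarith
    have hs := Finset.card_nsmul_le_sum (Finset.Icc ((n+1)/2) n) (fun m => (m:ℝ)^p)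
      (((n:ℝ)/2)^p) hlow
    rw [nsmul_eq_mul, hcard] at hs
    refine le_trans ?_ hs
    rw [mul_comm]
    have : n ≤ 2 * (n + 1 - (n+1)/2) := by omega
    have h' : (n:ℝ) ≤ 2 * ((n + 1 - (n+1)/2 : ℕ) : ℝ) := by exact_mod_cast this
    have hp0 : (0:ℝ) ≤ ((n:ℝ)/2) ^ p := by positivity
    nlinarith
  have h3 : (n:ℝ) ^ (p+1) / 2 ^ (p+1) = ((n:ℝ)/2) ^ p * ((n:ℝ)/2) := by
    have hn0 : (0:ℝ) < n := by exact_mod_cast hn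
    rw [Real.rpow_add_one (ne_of_gt hn0), Real.rpow_add_one (two_ne_zero),
      Real.div_rpow (le_of_lt hn0) (by norm_num)]
    have h2p : (0:ℝ) < 2 ^ p := Real.rpow_pos_of_pos two_pos p
    field_simp
  rw [h3]
  calc ((n:ℝ)/2) ^ p * ((n:ℝ)/2) ≤ _ := h2
    _ ≤ _ := h1

lemma strong_of_convex {E : Type*} [NormedAddCommGroup E] [NormedSpace ℝ E] {F : E → ℝ}
    (h : ConvexOn ℝ (Set.univ : Set E) F) :
    StrongConvexOnSet (Set.univ : Set E) 0 F := by
  intro x _ y _ t ht0 ht1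
  have hb : (0:ℝ) ≤ 1 - t := by linarith
  have hab : t + (1 - t) = 1 := by ring
  have := h.2 (Set.mem_univ x) (Set.mem_univ y) ht0 hb hab
  simpa using this

lemma breg_ge_of_strong {E : Type*} [NormedAddCommGroup E] [InnerProductSpace ℝ E]
    {F : E → ℝ} {gF : E → E} {α : ℝ}
    (hsc : StrongConvexOnSet (Set.univ : Set E) α F)
    (z x : E) (hd : HasFDerivAt F (innerSL ℝ (gF x)) x) :
    α / 2 * ‖z - x‖ ^ 2 ≤ breg F gF z x := by
  set v := z - x with hv
  have hcurve : ∀ t : ℝ, HasDerivAt (fun s : ℝ => x + s • v) v t := by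
    intro t
    simpa using ((hasDerivAt_id t).smul_const v).const_add x
  have hphi : HasDerivAt (fun t : ℝ => F (x + t • v)) (⟪gF x, v⟫) 0 := by
    have h0 : x + (0:ℝ) • v = x := by simp
    have hd' : HasFDerivAt F (innerSL ℝ (gF x)) (x + (0:ℝ) • v) := by rw [h0]; exact hd
    have h := hd'.comp_hasDerivAt 0 (hcurve 0)
    simp only [innerSL_apply_apply] at h
    exact h
  have hslope := hasDerivAt_iff_tendsto_slope.1 hphi
  have hslope' : Filter.Tendsto (slope (fun t : ℝ => F (x + t • v)) 0)
      (nhdsWithin 0 (Set.Ioi 0)) (nhds ⟪gF x, v⟫) :=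
    hslope.mono_left (nhdsWithin_mono _ (fun t ht => ne_of_gt ht))
  have hpsi : Filter.Tendsto (fun t : ℝ => F z - F x - α/2 * (1-t) * ‖v‖^2)
      (nhdsWithin 0 (Set.Ioi 0)) (nhds (F z - F x - α/2 * ‖v‖^2)) := by
    have : Filter.Tendsto (fun t : ℝ => F z - F x - α/2 * (1-t) * ‖v‖^2) (nhds 0)
        (nhds (F z - F x - α/2 * (1-(0:ℝ)) * ‖v‖^2)) := by
      apply Continuous.tendsto
      continuity
    simpa using this.mono_left nhdsWithin_le_nhds
  have hkey : ⟪gF x, v⟫ ≤ F z - F x - α/2 * ‖v‖^2 := by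
    refine le_of_tendsto_of_tendsto hslope' hpsi ?_
    filter_upwards [Ioo_mem_nhdsGT_of_mem (Set.mem_Ico.2 ⟨le_refl 0, one_pos⟩)] with t ht
    obtain ⟨ht0, ht1⟩ := ht
    have hsc' := hsc (Set.mem_univ z) (Set.mem_univ x) (le_of_lt ht0) (le_of_lt ht1)
    have hxz : t • z + (1 - t) • x = x + t • v := by
      rw [hv]; module
    rw [hxz] at hsc'
    have hnorm : ‖z - x‖ = ‖v‖ := by rw [hv]
    rw [slope_def_field]
    simp only [sub_zero, zero_smul, add_zero]
    rw [div_le_iff₀ ht0]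
    rw [hnorm] at hsc'
    nlinarith
  simp only [breg]
  have : ⟪gF x, z - x⟫ = ⟪gF x, v⟫ := by rw [hv]
  rw [this]
  linarith

set_option maxHeartbeats 1000000 in
/-- Concrete `O(1/√N)` average-regret rate of PicCoLO (deterministic instance
of Theorem 2), for a mirror-descent base algorithm with monomial weights
`w_n = n^p` and adaptive regularization strength `α_n = w_{1:n}/√n`. -/
theorem piccolo_average_regret_rate (p : ℝ) (hp : 0 ≤ p) :
    ∃ C : ℝ, 0 < C ∧
      ∀ (E : Type) [NormedAddCommGroup E] [InnerProductSpace ℝ E]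
        (Pset : Set E), Pset.Nonempty → Convex ℝ Pset →
      ∀ N : ℕ, 1 ≤ N →
      ∀ w : ℕ → ℝ, (∀ n : ℕ, w n = (n : ℝ) ^ p) →
      ∀ (g ghat : ℕ → E) (G : ℝ),
        (∀ n, 1 ≤ n → n ≤ N → ‖g n - ghat n‖ ≤ G) →
      ∀ D MN : ℝ, 0 ≤ D →
        MN ≤ D * (∑ m ∈ Finset.Icc 1 N, w m) / Real.sqrt N →
      ∀ (R : ℕ → E → ℝ) (gradR : ℕ → E → E),
        (∀ n, n ≤ N → ∀ x : E, HasFDerivAt (R n) (innerSL ℝ (gradR n x)) x) →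
        ConvexOn ℝ (Set.univ : Set E) (R 0) →
        (∀ n, 1 ≤ n → n ≤ N →
          StrongConvexOnSet (Set.univ : Set E)
            ((∑ m ∈ Finset.Icc 1 n, w m) / Real.sqrt n) (R n)) →
      ∀ πh π : ℕ → E,
        (∀ n, 1 ≤ n → n ≤ N + 1 → πh n ∈ Pset) →
        (∀ n, 1 ≤ n → n ≤ N → π n ∈ Pset) →
        (∀ n, 1 ≤ n → n ≤ N → ∀ q ∈ Pset,
          ⟪w n • ghat n + gradR (n - 1) (π n) - gradR (n - 1) (πh n), π n - q⟫ ≤ 0) →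
        (∀ n, 1 ≤ n → n ≤ N → ∀ q ∈ Pset,
          ⟪w n • (g n - ghat n) + gradR n (πh (n + 1)) - gradR n (π n),
              πh (n + 1) - q⟫ ≤ 0) →
        (∀ q ∈ Pset,
          breg (R 0) (gradR 0) q (πh 1)
            + ∑ n ∈ Finset.Icc 1 N,
                (breg (R n) (gradR n) q (π n)
                  - breg (R (n - 1)) (gradR (n - 1)) q (π n)) ≤ MN) →
      ∀ q ∈ Pset,
        (1 / ∑ m ∈ Finset.Icc 1 N, w m)
            * ∑ n ∈ Finset.Icc 1 N, w n * ⟪g n, π n - q⟫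
          ≤ (D + C * G ^ 2) / Real.sqrt N := by
  refine ⟨2 ^ (2*p+3), Real.rpow_pos_of_pos two_pos _, ?_⟩
  intro E _ _ Pset hPne hPconv N hN w hw g ghat G hG D MN hD hMN R gradR hdiff hconv hsc
    πh π hπh hπ hcond1 hcond2 hcond3 q hq
  have hwnn : ∀ n, 0 ≤ w n := fun n => by rw [hw n]; positivity
  have hWeq : ∀ k : ℕ, ∑ m ∈ Finset.Icc 1 k, w m = ∑ m ∈ Finset.Icc 1 k, (m:ℝ) ^ p :=
    fun k => Finset.sum_congr rfl (fun m _ => hw m)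
  have hWpos : ∀ k, 1 ≤ k → 0 < ∑ m ∈ Finset.Icc 1 k, w m := by
    intro k hk
    rw [hWeq k]
    have := sum_pow_ge p hp k hk
    have hk0 : (0:ℝ) < k := by exact_mod_cast hk
    have : (0:ℝ) < (k:ℝ) ^ (p+1) / 2 ^ (p+1) := by positivity
    linarith [sum_pow_ge p hp k hk]
  have hsN : (0:ℝ) < Real.sqrt N := Real.sqrt_pos.2 (by exact_mod_cast hN)
  have hGnn : 0 ≤ G := le_trans (norm_nonneg _) (hG 1 le_rfl hN)
  -- per-step bound
  have hstep : ∀ n ∈ Finset.Icc 1 N,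
      w n * ⟪g n, π n - q⟫ ≤
        (breg (R (n-1)) (gradR (n-1)) q (πh n) - breg (R n) (gradR n) q (πh (n+1)))
        + (breg (R n) (gradR n) q (π n) - breg (R (n-1)) (gradR (n-1)) q (π n))
        + G^2/2 * ((w n)^2 * Real.sqrt n / (∑ m ∈ Finset.Icc 1 n, w m)) := by
    intro n hn
    rw [Finset.mem_Icc] at hn
    obtain ⟨hn1, hnN⟩ := hn
    have hsqn : (0:ℝ) < Real.sqrt n := Real.sqrt_pos.2 (by exact_mod_cast hn1)
    have hWn : 0 < ∑ m ∈ Finset.Icc 1 n, w m := hWpos n hn1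
    set A : ℝ := (∑ m ∈ Finset.Icc 1 n, w m) / Real.sqrt n with hA_def
    have hA : 0 < A := div_pos hWn hsqn
    -- condition (i)
    have e1 := hcond1 n hn1 hnN q hq
    have e1' : w n * ⟪ghat n, π n - q⟫
        + (⟪gradR (n-1) (π n), π n - q⟫ - ⟪gradR (n-1) (πh n), π n - q⟫) ≤ 0 := by
      have heq : ⟪w n • ghat n + gradR (n-1) (π n) - gradR (n-1) (πh n), π n - q⟫
          = w n * ⟪ghat n, π n - q⟫
            + (⟪gradR (n-1) (π n), π n - q⟫ - ⟪gradR (n-1) (πh n), π n - q⟫) := by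
        simp only [inner_sub_left, inner_add_left, real_inner_smul_left]
        ring
      rw [heq] at e1; exact e1
    have tp1 := breg_three_point (R (n-1)) (gradR (n-1)) q (π n) (πh n)
    have tp1' : ⟪gradR (n-1) (πh n), π n - q⟫ - ⟪gradR (n-1) (π n), π n - q⟫
        = breg (R (n-1)) (gradR (n-1)) q (πh n) - breg (R (n-1)) (gradR (n-1)) q (π n)
          - breg (R (n-1)) (gradR (n-1)) (π n) (πh n) := by
      rw [← tp1, inner_sub_left]
    have h1 : w n * ⟪ghat n, π n - q⟫
        ≤ breg (R (n-1)) (gradR (n-1)) q (πh n) - breg (R (n-1)) (gradR (n-1)) q (π n)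
          - breg (R (n-1)) (gradR (n-1)) (π n) (πh n) := by linarith
    -- condition (ii)
    have e2 := hcond2 n hn1 hnN q hq
    have e2' : w n * ⟪g n - ghat n, πh (n+1) - q⟫
        + (⟪gradR n (πh (n+1)), πh (n+1) - q⟫ - ⟪gradR n (π n), πh (n+1) - q⟫) ≤ 0 := by
      have heq : ⟪w n • (g n - ghat n) + gradR n (πh (n+1)) - gradR n (π n), πh (n+1) - q⟫
          = w n * ⟪g n - ghat n, πh (n+1) - q⟫
            + (⟪gradR n (πh (n+1)), πh (n+1) - q⟫ - ⟪gradR n (π n), πh (n+1) - q⟫) := by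
        simp only [inner_sub_left, inner_add_left, real_inner_smul_left]
        ring
      rw [heq] at e2; exact e2
    have tp2 := breg_three_point (R n) (gradR n) q (πh (n+1)) (π n)
    have tp2' : ⟪gradR n (π n), πh (n+1) - q⟫ - ⟪gradR n (πh (n+1)), πh (n+1) - q⟫
        = breg (R n) (gradR n) q (π n) - breg (R n) (gradR n) q (πh (n+1))
          - breg (R n) (gradR n) (πh (n+1)) (π n) := by
      rw [← tp2, inner_sub_left]
    have h2 : w n * ⟪g n - ghat n, πh (n+1) - q⟫
        ≤ breg (R n) (gradR n) q (π n) - breg (R n) (gradR n) q (πh (n+1))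
          - breg (R n) (gradR n) (πh (n+1)) (π n) := by linarith
    -- nonnegativity of breg (R (n-1))
    have h3 : 0 ≤ breg (R (n-1)) (gradR (n-1)) (π n) (πh n) := by
      rcases eq_or_lt_of_le hn1 with h|h
      · have h0 : n - 1 = 0 := by omega
        rw [h0]
        have := breg_ge_of_strong (strong_of_convex hconv) (π n) (πh n)
          (hdiff 0 (Nat.zero_le N) (πh n))
        simpa using this
      · have hn1' : 1 ≤ n - 1 := by omega
        have hb := breg_ge_of_strong (hsc (n-1) hn1' (by omega)) (π n) (πh n)
          (hdiff (n-1) (by omega) (πh n))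
        refine le_trans ?_ hb
        have hW' : 0 < ∑ m ∈ Finset.Icc 1 (n-1), w m := hWpos (n-1) hn1'
        have hs' : (0:ℝ) < Real.sqrt (n-1 : ℕ) := Real.sqrt_pos.2 (by exact_mod_cast hn1')
        positivity
    -- strong convexity lower bound for step n
    have h4 : A/2 * ‖πh (n+1) - π n‖^2 ≤ breg (R n) (gradR n) (πh (n+1)) (π n) :=
      breg_ge_of_strong (hsc n hn1 hnN) (πh (n+1)) (π n) (hdiff n hnN (π n))
    -- Cauchy-Schwarz term
    set d : ℝ := ‖πh (n+1) - π n‖ with hd_def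
    have h5 : w n * ⟪g n - ghat n, π n - πh (n+1)⟫ ≤ w n * (G * d) := by
      apply mul_le_mul_of_nonneg_left _ (hwnn n)
      have hcs := real_inner_le_norm (g n - ghat n) (π n - πh (n+1))
      have hGn := hG n hn1 hnN
      have hnr : ‖π n - πh (n+1)‖ = d := by rw [hd_def, norm_sub_rev]
      calc ⟪g n - ghat n, π n - πh (n+1)⟫ ≤ ‖g n - ghat n‖ * ‖π n - πh (n+1)‖ := hcs
        _ ≤ G * d := by rw [hnr]; exact mul_le_mul_of_nonneg_right hGn (norm_nonneg _)
    -- AM-GM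
    have hteq : (w n)^2 * Real.sqrt n / (∑ m ∈ Finset.Icc 1 n, w m) = (w n)^2 / A := by
      rw [hA_def, div_div_eq_mul_div]
    have h6 : w n * (G * d) ≤ A/2 * d^2 + G^2/2 * ((w n)^2 / A) := by
      have hexp : (A*d - w n*G)^2/(2*A) = A/2*d^2 - w n*(G*d) + G^2/2*((w n)^2/A) := by
        field_simp
        ring
      have hnn := div_nonneg (sq_nonneg (A*d - w n*G)) (by positivity : (0:ℝ) ≤ 2*A)
      rw [hexp] at hnn
      linarith
    -- decomposition
    have decomp : ⟪g n, π n - q⟫ = ⟪ghat n, π n - q⟫ + ⟪g n - ghat n, π n - πh (n+1)⟫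
        + ⟪g n - ghat n, πh (n+1) - q⟫ := by
      simp only [inner_sub_left, inner_sub_right]
      ring
    rw [hteq, decomp, mul_add, mul_add]
    linarith
  -- sum the step bounds
  have hsum := Finset.sum_le_sum hstep
  rw [Finset.sum_add_distrib, Finset.sum_add_distrib] at hsum
  -- telescoping
  have htel : ∑ n ∈ Finset.Icc 1 N,
      (breg (R (n-1)) (gradR (n-1)) q (πh n) - breg (R n) (gradR n) q (πh (n+1)))
      = breg (R 0) (gradR 0) q (πh 1) - breg (R N) (gradR N) q (πh (N+1)) := by
    have := telescope_sum (fun k => breg (R k) (gradR k) q (πh (k+1))) N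
    rw [← this]
    apply Finset.sum_congr rfl
    intro n hn
    rw [Finset.mem_Icc] at hn
    have h : n - 1 + 1 = n := by omega
    simp only [h]
  rw [htel] at hsum
  -- last Bregman divergence is nonnegative
  have hfN : 0 ≤ breg (R N) (gradR N) q (πh (N+1)) := by
    have hb := breg_ge_of_strong (hsc N hN le_rfl) q (πh (N+1)) (hdiff N le_rfl (πh (N+1)))
    refine le_trans ?_ hb
    have hW' : 0 < ∑ m ∈ Finset.Icc 1 N, w m := hWpos N hN
    positivity
  -- bound for the error-term sum
  have hterm : ∀ n ∈ Finset.Icc 1 N,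
      (w n)^2 * Real.sqrt n / (∑ m ∈ Finset.Icc 1 n, w m)
        ≤ 2^(p+1) * (N:ℝ)^p * (1 / Real.sqrt n) := by
    intro n hn
    rw [Finset.mem_Icc] at hn
    obtain ⟨hn1, hnN⟩ := hn
    have hn0 : (0:ℝ) < n := by exact_mod_cast hn1
    have hsn : (0:ℝ) < Real.sqrt n := Real.sqrt_pos.2 hn0
    have hWn : 0 < ∑ m ∈ Finset.Icc 1 n, w m := hWpos n hn1
    rw [hw n, hWeq n]
    have hWn' : 0 < ∑ m ∈ Finset.Icc 1 n, (m:ℝ)^p := by rw [← hWeq n]; exact hWn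
    rw [div_le_iff₀ hWn']
    have h1s : 2^(p+1) * (N:ℝ)^p * (1/Real.sqrt n) * (∑ m ∈ Finset.Icc 1 n, (m:ℝ)^p)
        = 2^(p+1) * (N:ℝ)^p * (∑ m ∈ Finset.Icc 1 n, (m:ℝ)^p) / Real.sqrt n := by ring
    rw [h1s, le_div_iff₀ hsn]
    have hss : Real.sqrt n * Real.sqrt n = (n:ℝ) := Real.mul_self_sqrt (le_of_lt hn0)
    have hge := sum_pow_ge p hp n hn1
    have h2p : (0:ℝ) < 2^(p+1) := Real.rpow_pos_of_pos two_pos _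
    have hge' : (n:ℝ)^(p+1) ≤ (∑ m ∈ Finset.Icc 1 n, (m:ℝ)^p) * 2^(p+1) := by
      rw [← div_le_iff₀ h2p]; exact hge
    have hnp : (n:ℝ)^p ≤ (N:ℝ)^p :=
      Real.rpow_le_rpow (le_of_lt hn0) (by exact_mod_cast hnN) hp
    have hpe : (n:ℝ)^(p+1) = (n:ℝ)^p * n := Real.rpow_add_one (ne_of_gt hn0) p
    have hnpn : (0:ℝ) ≤ (n:ℝ)^p := by positivity
    have hNpn : (0:ℝ) ≤ (N:ℝ)^p := by positivity
    calc ((n:ℝ)^p)^2 * Real.sqrt n * Real.sqrt n = ((n:ℝ)^p)^2 * ((n:ℝ)) := by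
          rw [mul_assoc, hss]
      _ ≤ (N:ℝ)^p * ((n:ℝ)^p * n) := by
          have hx : (n:ℝ)^p * (n:ℝ)^p ≤ (N:ℝ)^p * (n:ℝ)^p :=
            mul_le_mul_of_nonneg_right hnp hnpn
          have hx2 : ((n:ℝ)^p * (n:ℝ)^p) * n ≤ ((N:ℝ)^p * (n:ℝ)^p) * n :=
            mul_le_mul_of_nonneg_right hx (le_of_lt hn0)
          nlinarith [hx2]
      _ = (N:ℝ)^p * (n:ℝ)^(p+1) := by rw [hpe]
      _ ≤ (N:ℝ)^p * ((∑ m ∈ Finset.Icc 1 n, (m:ℝ)^p) * 2^(p+1)) :=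
          mul_le_mul_of_nonneg_left hge' hNpn
      _ = 2^(p+1) * (N:ℝ)^p * (∑ m ∈ Finset.Icc 1 n, (m:ℝ)^p) := by ring
  have hsumt : ∑ n ∈ Finset.Icc 1 N, (w n)^2 * Real.sqrt n / (∑ m ∈ Finset.Icc 1 n, w m)
      ≤ 2^(2*p+3) * (∑ m ∈ Finset.Icc 1 N, w m) / Real.sqrt N := by
    have hNp : (0:ℝ) ≤ (N:ℝ)^p := by positivity
    have h2p : (0:ℝ) < 2^(p+1) := Real.rpow_pos_of_pos two_pos _
    calc ∑ n ∈ Finset.Icc 1 N, (w n)^2 * Real.sqrt n / (∑ m ∈ Finset.Icc 1 n, w m)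
        ≤ ∑ n ∈ Finset.Icc 1 N, 2^(p+1) * (N:ℝ)^p * (1 / Real.sqrt n) :=
          Finset.sum_le_sum hterm
      _ = 2^(p+1) * (N:ℝ)^p * ∑ n ∈ Finset.Icc 1 N, (1 / Real.sqrt n) := by
          rw [Finset.mul_sum]
      _ ≤ 2^(p+1) * (N:ℝ)^p * (2 * Real.sqrt N) :=
          mul_le_mul_of_nonneg_left (sum_inv_sqrt_le N) (by positivity)
      _ ≤ 2^(2*p+3) * (∑ m ∈ Finset.Icc 1 N, w m) / Real.sqrt N := by
          rw [hWeq N, le_div_iff₀ hsN]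
          have hN0 : (0:ℝ) < N := by exact_mod_cast hN
          have hss : Real.sqrt N * Real.sqrt N = (N:ℝ) := Real.mul_self_sqrt (le_of_lt hN0)
          have hge' : (N:ℝ)^(p+1) ≤ (∑ m ∈ Finset.Icc 1 N, (m:ℝ)^p) * 2^(p+1) := by
            rw [← div_le_iff₀ h2p]; exact sum_pow_ge p hp N hN
          have hsplit : (2:ℝ)^(2*p+3) = 2^(p+1) * 2^(p+2) := by
            rw [← Real.rpow_add two_pos]; ring_nf
          have hpe : (N:ℝ)^(p+1) = (N:ℝ)^p * N := Real.rpow_add_one (ne_of_gt hN0) p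
          have h2p2 : (0:ℝ) < 2^(p+2) := Real.rpow_pos_of_pos two_pos _
          calc 2^(p+1) * (N:ℝ)^p * (2 * Real.sqrt N) * Real.sqrt N
              = 2^(p+1) * (N:ℝ)^p * 2 * ((N:ℝ)) := by
                linear_combination (2^(p+1) * (N:ℝ)^p * 2) * hss
            _ = 2 * (N:ℝ)^(p+1) * 2^(p+1) := by rw [hpe]; ring
            _ ≤ 2 * ((∑ m ∈ Finset.Icc 1 N, (m:ℝ)^p) * 2^(p+1)) * 2^(p+1) := by
                have h2' : (0:ℝ) ≤ 2^(p+1) := le_of_lt h2p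
                nlinarith [hge']
            _ ≤ 2^(2*p+3) * (∑ m ∈ Finset.Icc 1 N, (m:ℝ)^p) := by
                rw [hsplit]
                have hsum0 : (0:ℝ) ≤ ∑ m ∈ Finset.Icc 1 N, (m:ℝ)^p := by positivity
                have h22 : (2:ℝ) * 2^(p+1) ≤ 2^(p+2) := by
                  have : (2:ℝ)^(p+2) = 2^(p+1) * 2 := by
                    rw [← Real.rpow_add_one (two_ne_zero) (p+1)]; ring_nf
                  rw [this]; nlinarith
                have hx := mul_le_mul_of_nonneg_right h22
                  (mul_nonneg (le_of_lt h2p) hsum0)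
                nlinarith [hx]
  -- combine
  have hiii := hcond3 q hq
  set W := ∑ m ∈ Finset.Icc 1 N, w m with hW_def
  have hW : 0 < W := hWpos N hN
  have hZ : G^2/2 * (∑ n ∈ Finset.Icc 1 N, (w n)^2 * Real.sqrt n / (∑ m ∈ Finset.Icc 1 n, w m))
      ≤ G^2 * (2^(2*p+3) * W / Real.sqrt N) := by
    have h1 : G^2/2 * (∑ n ∈ Finset.Icc 1 N, (w n)^2 * Real.sqrt n / (∑ m ∈ Finset.Icc 1 n, w m))
        ≤ G^2/2 * (2^(2*p+3) * W / Real.sqrt N) :=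
      mul_le_mul_of_nonneg_left hsumt (by positivity)
    have h2 : (0:ℝ) ≤ 2^(2*p+3) * W / Real.sqrt N := by positivity
    have h3 := mul_nonneg (sq_nonneg G) h2
    linarith
  have hS : ∑ n ∈ Finset.Icc 1 N, w n * ⟪g n, π n - q⟫
      ≤ (D + 2^(2*p+3) * G^2) * W / Real.sqrt N := by
    have hsum3 : ∑ n ∈ Finset.Icc 1 N, G^2/2 * ((w n)^2 * Real.sqrt n / (∑ m ∈ Finset.Icc 1 n, w m))
        = G^2/2 * ∑ n ∈ Finset.Icc 1 N, (w n)^2 * Real.sqrt n / (∑ m ∈ Finset.Icc 1 n, w m) := by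
      rw [Finset.mul_sum]
    rw [hsum3] at hsum
    have : (D + 2^(2*p+3) * G^2) * W / Real.sqrt N
        = D * W / Real.sqrt N + G^2 * (2^(2*p+3) * W / Real.sqrt N) := by ring
    rw [this]
    linarith
  have hfinal := mul_le_mul_of_nonneg_left hS (le_of_lt (one_div_pos.2 hW))
  have heq : (1/W) * ((D + 2^(2*p+3) * G^2) * W / Real.sqrt N)
      = (D + 2^(2*p+3) * G^2) / Real.sqrt N := by
    field_simp
  rw [heq] at hfinal
  exact hfinal
end
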